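/- arXiv:1402.3697 — 4 statements merged into one kernel-verified Lean document; each statement's English description precedes it below -/
import Mathlib

section
/- The arithmetic function B(q) is multiplicative: if q₁, q₂ ∈ ℕ with gcd(q₁,q₂) = 1 then B(q₁q₂) = B(q₁)·B(q₂). -/
open MeasureTheory Finset
open scoped BigOperators

noncomputable section

/-- `e(z) = exp(2πiz)`. -/
def eF (z : ℝ) : ℂ := Complex.exp (2 * Real.pi * Complex.I * z)

/-- quadratic form `xᵀAx` for an integer matrix. -/
def qfZ {n : ℕ} (A : Matrix (Fin n) (Fin n) ℤ) (x : Fin n → ℤ) : ℤ :=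
  ∑ i, ∑ j, A i j * x i * x j

/-- the complete exponential sum `C(q,a)`. -/
def Cqa {n : ℕ} (A : Matrix (Fin n) (Fin n) ℤ) (q a : ℕ) : ℂ :=
  ∑ h ∈ Fintype.piFinset (fun _ : Fin n => Finset.Icc 1 q),
    if ∀ i, Nat.gcd (h i) q = 1 then
      eF (((qfZ A fun i => (h i : ℤ)) : ℝ) * (a : ℝ) / (q : ℝ)) else 0

/-- `B(q) = φ(q)^{-n} ∑_{(a,q)=1} C(q,a) e(-at/q)`. -/
def Bq {n : ℕ} (A : Matrix (Fin n) (Fin n) ℤ) (t : ℤ) (q : ℕ) : ℂ :=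
  ((Nat.totient q : ℂ) ^ n)⁻¹ *
    ∑ a ∈ Finset.Icc 1 q,
      if Nat.gcd a q = 1 then Cqa A q a * eF (-((a : ℝ) * (t : ℝ)) / (q : ℝ)) else 0

lemma eF_add (x y : ℝ) : eF (x + y) = eF x * eF y := by
  rw [eF, eF, eF, ← Complex.exp_add]
  congr 1
  push_cast
  ring

lemma eF_intCast (k : ℤ) : eF k = 1 := by
  rw [eF]
  rw [show (2 * (Real.pi:ℂ) * Complex.I * (k:ℝ) : ℂ) = (k:ℂ) * (2 * Real.pi * Complex.I) by push_cast; ring]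
  exact Complex.exp_int_mul_two_pi_mul_I k

lemma eF_add_int (x : ℝ) (k : ℤ) : eF (x + k) = eF x := by
  rw [eF_add, eF_intCast, mul_one]

def psiZ (q : ℕ) (x : ZMod q) : ℂ := eF ((ZMod.val x : ℝ) / q)

lemma psiZ_intCast (q : ℕ) [NeZero q] (m : ℤ) : psiZ q (m : ZMod q) = eF ((m : ℝ) / q) := by
  have hq : (q:ℝ) ≠ 0 := Nat.cast_ne_zero.mpr (NeZero.ne q)
  have hv : (((m : ZMod q).val : ℤ)) = m % q := ZMod.val_intCast m
  have hm : (m:ℝ)/q = ((m : ZMod q).val : ℝ)/q + ((m / q : ℤ) : ℝ) := by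
    have h1 : ((m : ZMod q).val : ℝ) = ((m % q : ℤ) : ℝ) := by exact_mod_cast congrArg (Int.cast : ℤ → ℝ) hv
    have h2 : ((m % q : ℤ) : ℝ) + (q:ℝ) * ((m / q : ℤ) : ℝ) = (m:ℝ) := by
      exact_mod_cast congrArg (Int.cast : ℤ → ℝ) (Int.emod_add_mul_ediv m q)
    rw [h1]
    field_simp
    linarith [h2]
  rw [psiZ, hm, eF_add_int]

def repZ {q : ℕ} (x : ZMod q) : ℕ := if ZMod.val x = 0 then q else ZMod.val x

lemma repZ_mem {q : ℕ} (hq : q ≠ 0) (x : ZMod q) : repZ x ∈ Finset.Icc 1 q := by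
  haveI : NeZero q := ⟨hq⟩
  rw [repZ]
  split
  · exact Finset.mem_Icc.mpr ⟨Nat.one_le_iff_ne_zero.mpr hq, le_rfl⟩
  · next h => exact Finset.mem_Icc.mpr ⟨Nat.one_le_iff_ne_zero.mpr h, (ZMod.val_lt x).le⟩

lemma repZ_cast {q : ℕ} [NeZero q] (x : ZMod q) : ((repZ x : ℕ) : ZMod q) = x := by
  have hval : ((ZMod.val x : ℕ) : ZMod q) = x := by
    rw [ZMod.natCast_val, ZMod.cast_id]
  rw [repZ]
  split
  · next h =>
    rw [ZMod.natCast_self, ← hval, h, Nat.cast_zero]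
  · exact hval

lemma repZ_of_Icc {q : ℕ} [NeZero q] {a : ℕ} (ha : a ∈ Finset.Icc 1 q) :
    repZ ((a : ZMod q)) = a := by
  obtain ⟨h1, h2⟩ := Finset.mem_Icc.mp ha
  rw [repZ, ZMod.val_natCast]
  rcases eq_or_lt_of_le h2 with rfl | hlt
  · simp
  · rw [Nat.mod_eq_of_lt hlt]
    split
    · next h => omega
    · rfl

lemma repZ_coprime {q : ℕ} [NeZero q] (x : (ZMod q)ˣ) :
    Nat.gcd (repZ (x : ZMod q)) q = 1 := by
  have : IsUnit ((repZ (x : ZMod q) : ℕ) : ZMod q) := by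
    rw [repZ_cast]; exact x.isUnit
  exact (ZMod.isUnit_iff_coprime _ q).mp this

lemma sum_Icc_ite_units {q : ℕ} [NeZero q] (F : ZMod q → ℂ) :
    (∑ a ∈ Finset.Icc 1 q, if Nat.gcd a q = 1 then F (a : ZMod q) else 0)
      = ∑ α : (ZMod q)ˣ, F ↑α := by
  have hq := NeZero.ne q
  rw [← Finset.sum_filter]
  refine Finset.sum_bij' (fun a ha => ZMod.unitOfCoprime a (Finset.mem_filter.mp ha).2)
    (fun α _ => repZ (α : ZMod q)) (fun a ha => Finset.mem_univ _)
    (fun α _ => Finset.mem_filter.mpr ⟨repZ_mem hq _, repZ_coprime α⟩)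
    (fun a ha => repZ_of_Icc (Finset.mem_filter.mp ha).1)
    (fun α _ => by
      ext
      rw [ZMod.coe_unitOfCoprime, repZ_cast])
    (fun a ha => rfl)

lemma sum_piIcc_ite_units {n q : ℕ} [NeZero q] (F : (Fin n → ZMod q) → ℂ) :
    (∑ h ∈ Fintype.piFinset (fun _ : Fin n => Finset.Icc 1 q),
      if ∀ i, Nat.gcd (h i) q = 1 then F (fun i => (h i : ZMod q)) else 0)
      = ∑ η : Fin n → (ZMod q)ˣ, F (fun i => ↑(η i)) := by
  have hq := NeZero.ne q
  rw [← Finset.sum_filter]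
  refine Finset.sum_bij'
    (fun h hh => fun k => ZMod.unitOfCoprime (h k) ((Finset.mem_filter.mp hh).2 k))
    (fun η _ => fun k => repZ (η k : ZMod q)) (fun h hh => Finset.mem_univ _)
    (fun η _ => Finset.mem_filter.mpr ⟨Fintype.mem_piFinset.mpr fun k => repZ_mem hq _,
      fun k => repZ_coprime (η k)⟩)
    (fun h hh => funext fun k =>
      repZ_of_Icc (Fintype.mem_piFinset.mp (Finset.mem_filter.mp hh).1 k))
    (fun η _ => funext fun k => by ext; rw [ZMod.coe_unitOfCoprime, repZ_cast])
    (fun h hh => rfl)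

def QZv {n : ℕ} (A : Matrix (Fin n) (Fin n) ℤ) {q : ℕ} (x : Fin n → ZMod q) : ZMod q :=
  ∑ i, ∑ j, (A i j : ZMod q) * x i * x j

def TZ {n : ℕ} (A : Matrix (Fin n) (Fin n) ℤ) (t : ℤ) (q : ℕ) [NeZero q] : ℂ :=
  ∑ α : (ZMod q)ˣ, ∑ η : Fin n → (ZMod q)ˣ,
    psiZ q ((α : ZMod q) * (QZv A (fun i => (η i : ZMod q)) - (t : ZMod q)))

set_option maxHeartbeats 1000000 in
lemma Bq_eq_TZ {n : ℕ} (A : Matrix (Fin n) (Fin n) ℤ) (t : ℤ) (q : ℕ) [NeZero q] :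
    Bq A t q = ((Nat.totient q : ℂ) ^ n)⁻¹ * TZ A t q := by
  rw [Bq]
  congr 1
  set G : ZMod q → ℂ := fun y => ∑ η : Fin n → (ZMod q)ˣ,
    psiZ q (y * (QZv A (fun i => (η i : ZMod q)) - (t : ZMod q))) with hG
  have key : ∀ a : ℕ, Nat.gcd a q = 1 →
      Cqa A q a * eF (-((a : ℝ) * (t : ℝ)) / (q : ℝ)) = G ((a : ℕ) : ZMod q) := by
    intro a _
    rw [hG]
    beta_reduce
    rw [Cqa, Finset.sum_mul]
    rw [← sum_piIcc_ite_units (n := n) (q := q) (F := fun x : Fin n → ZMod q =>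
      psiZ q ((a : ZMod q) * (QZv A x - (t : ZMod q))))]
    refine Finset.sum_congr rfl fun h hh => ?_
    split
    · next hcop =>
      rw [← eF_add]
      have harg : ((qfZ A fun i => (h i : ℤ)) : ℝ) * (a : ℝ) / (q : ℝ)
            + -((a : ℝ) * (t : ℝ)) / (q : ℝ)
          = (((a * (qfZ A (fun i => (h i : ℤ)) - t) : ℤ)) : ℝ) / q := by
        push_cast
        ring
      rw [harg, ← psiZ_intCast]
      congr 1
      push_cast [QZv, qfZ]
      ring
    · rw [zero_mul]
  calc (∑ a ∈ Finset.Icc 1 q,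
          if Nat.gcd a q = 1 then Cqa A q a * eF (-((a : ℝ) * (t : ℝ)) / (q : ℝ)) else 0)
      = ∑ a ∈ Finset.Icc 1 q, if Nat.gcd a q = 1 then G ((a : ℕ) : ZMod q) else 0 := by
        refine Finset.sum_congr rfl fun a _ => ?_
        split
        · next hcop => exact key a hcop
        · rfl
    _ = ∑ α : (ZMod q)ˣ, G ↑α := sum_Icc_ite_units (q := q) G
    _ = TZ A t q := by rw [TZ]

lemma QZv_map {n : ℕ} (A : Matrix (Fin n) (Fin n) ℤ) {q r : ℕ} (f : ZMod q →+* ZMod r)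
    (x : Fin n → ZMod q) : f (QZv A x) = QZv A (fun i => f (x i)) := by
  simp [QZv, map_sum, map_mul, map_intCast]

lemma sum_twist {n : ℕ} (A : Matrix (Fin n) (Fin n) ℤ) (t : ℤ) (q : ℕ) [NeZero q]
    (w : (ZMod q)ˣ) :
    (∑ α : (ZMod q)ˣ, ∑ η : Fin n → (ZMod q)ˣ,
      psiZ q ((w : ZMod q) * ((α : ZMod q) * (QZv A (fun i => (η i : ZMod q)) - (t : ZMod q)))))
    = TZ A t q := by
  rw [TZ]
  refine Fintype.sum_bijective (fun α => w * α) (Group.mulLeft_bijective w) _ _ fun α => ?_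
  refine Finset.sum_congr rfl fun η _ => ?_
  rw [Units.val_mul, mul_assoc]

lemma TZ_mul {n : ℕ} (A : Matrix (Fin n) (Fin n) ℤ) (t : ℤ) (q₁ q₂ : ℕ)
    [NeZero q₁] [NeZero q₂] [NeZero (q₁ * q₂)] (hcop : Nat.Coprime q₁ q₂) :
    TZ A t (q₁ * q₂) = TZ A t q₁ * TZ A t q₂ := by
  have hq₁ : (q₁ : ℝ) ≠ 0 := Nat.cast_ne_zero.mpr (NeZero.ne q₁)
  have hq₂ : (q₂ : ℝ) ≠ 0 := Nat.cast_ne_zero.mpr (NeZero.ne q₂)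
  -- Bezout
  set u : ℤ := Nat.gcdA q₁ q₂ with hu
  set v : ℤ := Nat.gcdB q₁ q₂ with hv
  have hbez : (1 : ℤ) = q₁ * u + q₂ * v := by
    have := Nat.gcd_eq_gcd_ab q₁ q₂
    rwa [hcop, Nat.cast_one] at this
  -- CRT ring equiv and projections
  set φ := ZMod.chineseRemainder hcop with hφ
  set r₁ : ZMod (q₁ * q₂) →+* ZMod q₁ := (RingHom.fst (ZMod q₁) (ZMod q₂)).comp φ.toRingHom with hr₁
  set r₂ : ZMod (q₁ * q₂) →+* ZMod q₂ := (RingHom.snd (ZMod q₁) (ZMod q₂)).comp φ.toRingHom with hr₂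
  -- psi splitting
  have psisplit : ∀ x : ZMod (q₁ * q₂),
      psiZ (q₁ * q₂) x = psiZ q₁ ((v : ZMod q₁) * r₁ x) * psiZ q₂ ((u : ZMod q₂) * r₂ x) := by
    intro x
    set m : ℤ := (ZMod.val x : ℤ) with hm
    have hx : x = ((m : ℤ) : ZMod (q₁ * q₂)) := by
      rw [hm]
      push_cast
      rw [ZMod.natCast_val, ZMod.cast_id]
    have h1 : (v : ZMod q₁) * r₁ x = ((v * m : ℤ) : ZMod q₁) := by
      rw [hx, map_intCast]
      push_cast
      ring
    have h2 : (u : ZMod q₂) * r₂ x = ((u * m : ℤ) : ZMod q₂) := by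
      rw [hx, map_intCast]
      push_cast
      ring
    rw [h1, h2, psiZ_intCast, psiZ_intCast, hx, psiZ_intCast, ← eF_add]
    congr 1
    have hbR : (1 : ℝ) = q₁ * u + q₂ * v := by exact_mod_cast congrArg (Int.cast : ℤ → ℝ) hbez
    push_cast
    field_simp
    linear_combination (m : ℝ) * hbR
  -- units equiv
  set e : (ZMod (q₁ * q₂))ˣ ≃* (ZMod q₁)ˣ × (ZMod q₂)ˣ :=
    (Units.mapEquiv φ.toMulEquiv).trans MulEquiv.prodUnits with he
  have he1 : ∀ α : (ZMod (q₁ * q₂))ˣ, (((e α).1 : ZMod q₁)) = r₁ ↑α := fun α => rfl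
  have he2 : ∀ α : (ZMod (q₁ * q₂))ˣ, (((e α).2 : ZMod q₂)) = r₂ ↑α := fun α => rfl
  -- w units
  have hvunit : IsUnit ((v : ZMod q₁)) := by
    refine IsUnit.of_mul_eq_one ((q₂ : ℤ) : ZMod q₁) ?_
    have : ((q₂ * v : ℤ) : ZMod q₁) = ((1 - q₁ * u : ℤ) : ZMod q₁) := by
      congr 1
      omega
    push_cast at this ⊢
    rw [mul_comm] at this
    simpa using this
  have huunit : IsUnit ((u : ZMod q₂)) := by
    refine IsUnit.of_mul_eq_one ((q₁ : ℤ) : ZMod q₂) ?_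
    have : ((q₁ * u : ℤ) : ZMod q₂) = ((1 - q₂ * v : ℤ) : ZMod q₂) := by
      congr 1
      omega
    push_cast at this ⊢
    rw [mul_comm] at this
    simpa using this
  obtain ⟨w₁, hw₁⟩ := hvunit
  obtain ⟨w₂, hw₂⟩ := huunit
  -- the two factor functions
  set G₁ : (ZMod q₁)ˣ × (Fin n → (ZMod q₁)ˣ) → ℂ := fun p =>
    psiZ q₁ ((w₁ : ZMod q₁) * ((p.1 : ZMod q₁) *
      (QZv A (fun i => (p.2 i : ZMod q₁)) - (t : ZMod q₁)))) with hG₁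
  set G₂ : (ZMod q₂)ˣ × (Fin n → (ZMod q₂)ˣ) → ℂ := fun p =>
    psiZ q₂ ((w₂ : ZMod q₂) * ((p.1 : ZMod q₂) *
      (QZv A (fun i => (p.2 i : ZMod q₂)) - (t : ZMod q₂)))) with hG₂
  -- pointwise identity
  have main : ∀ (α : (ZMod (q₁ * q₂))ˣ) (η : Fin n → (ZMod (q₁ * q₂))ˣ),
      psiZ (q₁ * q₂) ((α : ZMod (q₁ * q₂)) *
          (QZv A (fun i => (η i : ZMod (q₁ * q₂))) - (t : ZMod (q₁ * q₂))))
        = G₁ ((e α).1, fun i => (e (η i)).1) * G₂ ((e α).2, fun i => (e (η i)).2) := by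
    intro α η
    rw [psisplit]
    congr 1
    · rw [hG₁]
      beta_reduce
      simp only [hw₁, map_mul, map_sub, map_intCast, QZv_map, he1]
    · rw [hG₂]
      beta_reduce
      simp only [hw₂, map_mul, map_sub, map_intCast, QZv_map, he2]
  -- now reindex and split the sums
  rw [TZ]
  calc (∑ α : (ZMod (q₁ * q₂))ˣ, ∑ η : Fin n → (ZMod (q₁ * q₂))ˣ,
        psiZ (q₁ * q₂) ((α : ZMod (q₁ * q₂)) *
          (QZv A (fun i => (η i : ZMod (q₁ * q₂))) - (t : ZMod (q₁ * q₂)))))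
      = ∑ α : (ZMod (q₁ * q₂))ˣ, ∑ η : Fin n → (ZMod (q₁ * q₂))ˣ,
          G₁ ((e α).1, fun i => (e (η i)).1) * G₂ ((e α).2, fun i => (e (η i)).2) :=
        Finset.sum_congr rfl fun α _ => Finset.sum_congr rfl fun η _ => main α η
    _ = ∑ p : (ZMod q₁)ˣ × (ZMod q₂)ˣ, ∑ η : Fin n → (ZMod (q₁ * q₂))ˣ,
          G₁ (p.1, fun i => (e (η i)).1) * G₂ (p.2, fun i => (e (η i)).2) :=
        Fintype.sum_equiv e.toEquiv _ _ fun α => rfl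
    _ = ∑ p : (ZMod q₁)ˣ × (ZMod q₂)ˣ, ∑ ξ : Fin n → (ZMod q₁)ˣ × (ZMod q₂)ˣ,
          G₁ (p.1, fun i => (ξ i).1) * G₂ (p.2, fun i => (ξ i).2) :=
        Finset.sum_congr rfl fun p _ =>
          Fintype.sum_equiv (Equiv.piCongrRight fun _ => e.toEquiv) _ _ fun η => rfl
    _ = ∑ p : (ZMod q₁)ˣ × (ZMod q₂)ˣ, ∑ y : (Fin n → (ZMod q₁)ˣ) × (Fin n → (ZMod q₂)ˣ),
          G₁ (p.1, y.1) * G₂ (p.2, y.2) :=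
        Finset.sum_congr rfl fun p _ =>
          Fintype.sum_equiv (Equiv.arrowProdEquivProdArrow _ _ _) _ _ fun ξ => rfl
    _ = ∑ p₁ : (ZMod q₁)ˣ, ∑ p₂ : (ZMod q₂)ˣ,
          ∑ y₁ : Fin n → (ZMod q₁)ˣ, ∑ y₂ : Fin n → (ZMod q₂)ˣ,
          G₁ (p₁, y₁) * G₂ (p₂, y₂) := by
        rw [Fintype.sum_prod_type]
        exact Finset.sum_congr rfl fun p₁ _ => Finset.sum_congr rfl fun p₂ _ =>
          Fintype.sum_prod_type (f := fun y => G₁ ((p₁, p₂).1, y.1) * G₂ ((p₁, p₂).2, y.2))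
    _ = (∑ p₁ : (ZMod q₁)ˣ, ∑ y₁ : Fin n → (ZMod q₁)ˣ, G₁ (p₁, y₁)) *
        (∑ p₂ : (ZMod q₂)ˣ, ∑ y₂ : Fin n → (ZMod q₂)ˣ, G₂ (p₂, y₂)) := by
        rw [Finset.sum_mul_sum]
        exact Finset.sum_congr rfl fun p₁ _ => Finset.sum_congr rfl fun p₂ _ =>
          (Finset.sum_mul_sum _ _ _ _).symm
    _ = TZ A t q₁ * TZ A t q₂ := by
        rw [← sum_twist A t q₁ w₁, ← sum_twist A t q₂ w₂]

/-- The arithmetic function `B(q)` is multiplicative. -/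
theorem statement2 {n : ℕ} (A : Matrix (Fin n) (Fin n) ℤ) (hsymm : A.IsSymm) (t : ℤ)
    (q₁ q₂ : ℕ) (hq₁ : 1 ≤ q₁) (hq₂ : 1 ≤ q₂) (hcop : Nat.gcd q₁ q₂ = 1) :
    Bq A t (q₁ * q₂) = Bq A t q₁ * Bq A t q₂ := by
  haveI : NeZero q₁ := ⟨by omega⟩
  haveI : NeZero q₂ := ⟨by omega⟩
  haveI : NeZero (q₁ * q₂) := ⟨by positivity⟩
  rw [Bq_eq_TZ, Bq_eq_TZ, Bq_eq_TZ, TZ_mul A t q₁ q₂ hcop, Nat.totient_mul hcop]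
  push_cast
  rw [mul_pow, mul_inv]
  ring
end
end

section
/- Let C be a k×m matrix with rational entries and rank(C) ≥ 2. Then for every X ≥ 2, the number of pairs of integer vectors x ∈ ℤ^k, y ∈ ℤ^m with |x_i| ≤ X for all i, |y_j| ≤ X for all j, and xᵀCy = 0 is ≪ X^{k+m−2} log X, where the implied constant depends only on C. -/
open Finset
open scoped BigOperators

noncomputable section

lemma solve22 {u v s t d1 d2 : ℤ} (hd : u*t - v*s ≠ 0)
    (h1 : u*d1 + s*d2 = 0) (h2 : v*d1 + t*d2 = 0) : d1 = 0 ∧ d2 = 0 := by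
  constructor
  · have h : (u*t - v*s) * d1 = 0 := by linear_combination t * h1 - s * h2
    exact (mul_eq_zero.1 h).resolve_left hd
  · have h : (u*t - v*s) * d2 = 0 := by linear_combination u * h2 - v * h1
    exact (mul_eq_zero.1 h).resolve_left hd

lemma card_ne_pair {n : ℕ} {i1 i2 : Fin n} (h : i1 ≠ i2) :
    Fintype.card {i : Fin n // i ≠ i1 ∧ i ≠ i2} = n - 2 := by
  rw [Fintype.card_subtype]
  have : (univ.filter fun i : Fin n => i ≠ i1 ∧ i ≠ i2) = univ \ {i1, i2} := by
    ext i; simp [not_or, and_comm]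
  rw [this, card_sdiff_of_subset (subset_univ _), card_univ, Finset.card_pair h, Fintype.card_fin]

/-- reduce a sum of `b i * (x i - x' i)` supported on two indices -/

lemma sum_two_support {R : Type} [CommRing R] {n : ℕ} {i1 i2 : Fin n} (hne : i1 ≠ i2)
    (b z : Fin n → R) (hz : ∀ i, i ≠ i1 → i ≠ i2 → z i = 0) :
    ∑ i, b i * z i = b i1 * z i1 + b i2 * z i2 := by
  have h1 : ∑ i ∈ ({i1, i2} : Finset (Fin n)), b i * z i = ∑ i, b i * z i := by
    apply Finset.sum_subset (subset_univ _)
    intro i _ hi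
    simp only [mem_insert, mem_singleton, not_or] at hi
    rw [hz i hi.1 hi.2, mul_zero]
  rw [← h1, Finset.sum_pair hne]

lemma fiber_count {k : ℕ} (B : ℤ) (b1 b2 : Fin k → ℤ) {i1 i2 : Fin k}
    (hmin : b1 i1 * b2 i2 - b1 i2 * b2 i1 ≠ 0) (u0 v0 : ℤ) :
    (((Fintype.piFinset fun _ : Fin k => Finset.Icc (-B) B)).filter
      (fun x => (∑ i, b1 i * x i = u0) ∧ (∑ i, b2 i * x i = v0))).card
      ≤ (Finset.Icc (-B) B).card ^ (k - 2) := by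
  have hne : i1 ≠ i2 := by rintro rfl; simp at hmin
  classical
  have hcard : (Fintype.piFinset fun _ : {i : Fin k // i ≠ i1 ∧ i ≠ i2} =>
      Finset.Icc (-B) B).card = (Finset.Icc (-B) B).card ^ (k - 2) := by
    rw [Fintype.card_piFinset, Finset.prod_const, card_univ, card_ne_pair hne]
  rw [← hcard]
  apply Finset.card_le_card_of_injOn (fun x => fun i : {i : Fin k // i ≠ i1 ∧ i ≠ i2} => x i.1)
  · intro x hx
    rw [Finset.mem_coe, Finset.mem_filter] at hx
    rw [Finset.mem_coe, Fintype.mem_piFinset]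
    intro i
    exact (Fintype.mem_piFinset.1 hx.1) i.1
  · intro x hx x' hx' hproj
    simp only [Finset.coe_filter, Set.mem_setOf_eq] at hx hx'
    have hz : ∀ i : Fin k, i ≠ i1 → i ≠ i2 → x i - x' i = 0 := by
      intro i h1 h2
      have := congrFun hproj ⟨i, h1, h2⟩
      simpa [sub_eq_zero] using this
    have e1 : b1 i1 * (x i1 - x' i1) + b1 i2 * (x i2 - x' i2) = 0 := by
      rw [← sum_two_support hne b1 _ hz]
      have : ∑ i, b1 i * (x i - x' i) = (∑ i, b1 i * x i) - ∑ i, b1 i * x' i := by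
        rw [← Finset.sum_sub_distrib]; apply Finset.sum_congr rfl; intros; ring
      rw [this, hx.2.1, hx'.2.1, sub_self]
    have e2 : b2 i1 * (x i1 - x' i1) + b2 i2 * (x i2 - x' i2) = 0 := by
      rw [← sum_two_support hne b2 _ hz]
      have : ∑ i, b2 i * (x i - x' i) = (∑ i, b2 i * x i) - ∑ i, b2 i * x' i := by
        rw [← Finset.sum_sub_distrib]; apply Finset.sum_congr rfl; intros; ring
      rw [this, hx.2.2, hx'.2.2, sub_self]
    have hmin' : b1 i1 * b2 i2 - b2 i1 * b1 i2 ≠ 0 := by rw [mul_comm (b2 i1)]; exact hmin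
    obtain ⟨hd1, hd2⟩ := solve22 hmin' e1 e2
    funext i
    by_cases h1 : i = i1
    · subst h1; linarith [hd1]
    by_cases h2 : i = i2
    · subst h2; linarith [hd2]
    · have := hz i h1 h2; linarith

lemma ap_count (B : ℤ) (hB : 0 ≤ B) {q : ℤ} (hq : 1 ≤ q) (t0 : ℤ) :
    ((((Finset.Icc (-B) B)).filter (fun t => q ∣ (t - t0))).card : ℝ) ≤ 2*B/q + 2 := by
  have hq0 : 0 < q := hq
  set a := (-B - t0) / q with ha
  set b := (B - t0) / q with hb
  have hcard : (((Finset.Icc (-B) B)).filter (fun t => q ∣ (t - t0))).card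
      ≤ (Finset.Icc a b).card := by
    apply Finset.card_le_card_of_injOn (fun t => (t - t0) / q)
    · intro t ht
      rw [Finset.mem_coe, Finset.mem_filter, Finset.mem_Icc] at ht
      rw [Finset.mem_coe, Finset.mem_Icc]
      constructor
      · exact Int.ediv_le_ediv hq0 (by linarith [ht.1.1])
      · exact Int.ediv_le_ediv hq0 (by linarith [ht.1.2])
    · intro t ht t' ht' h
      simp only [coe_filter, Set.mem_setOf_eq] at ht ht'
      have e1 : (t - t0) / q * q = t - t0 := Int.ediv_mul_cancel ht.2
      have e2 : (t' - t0) / q * q = t' - t0 := Int.ediv_mul_cancel ht'.2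
      have h' : (t - t0)/q = (t'-t0)/q := h
      have : t - t0 = t' - t0 := by rw [← e1, ← e2, h']
      linarith
  have h2 : ((Finset.Icc a b).card : ℝ) ≤ 2*B/q + 2 := by
    rw [Int.card_Icc]
    rcases le_or_gt (b + 1 - a) 0 with h | h
    · rw [Int.toNat_of_nonpos h]
      push_cast
      positivity
    · rw [show (((b + 1 - a).toNat : ℕ) : ℝ) = ((b:ℝ) + 1 - a) by
        rw [show (((b + 1 - a).toNat : ℕ) : ℝ) = (((b + 1 - a : ℤ)) : ℝ) by
          exact_mod_cast congrArg (Int.cast : ℤ → ℝ) (Int.toNat_of_nonneg (by linarith))]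
        push_cast; ring]
      have hqR : (0:ℝ) < (q:ℝ) := by exact_mod_cast hq0
      have hbR : (b:ℝ) * q ≤ B - t0 := by
        exact_mod_cast Int.ediv_mul_le (B - t0) hq0.ne'
      have haR : (-B - t0 : ℝ) < ((a:ℝ) + 1) * q := by
        exact_mod_cast Int.lt_ediv_add_one_mul_self (-B - t0) hq0
      rw [div_add' _ _ _ hqR.ne', ← sub_nonneg]
      have key : (2*B + 2*q : ℝ) - (b + 1 - a) * q ≥ 0 := by nlinarith
      calc (0:ℝ) ≤ ((2*B + 2*q) - (b+1-a)*q) / q := by positivity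
        _ = (2*B + 2*q)/q - (b+1-a) := by field_simp
      
  calc (((Finset.Icc (-B) B)).filter (fun t => q ∣ (t - t0))).card
      ≤ ((Finset.Icc a b).card : ℝ) := by exact_mod_cast hcard
    _ ≤ _ := h2

lemma ycount {m : ℕ} (B : ℤ) (hB : 1 ≤ B) {j1 j2 : Fin m} (hj : j1 ≠ j2)
    {u v : ℤ} (hu : u ≠ 0) (Q : (Fin m → ℤ) → Prop) [DecidablePred Q]
    (hQ : ∀ y, Q y → ∀ y', Q y' → (∀ j, j ≠ j1 → j ≠ j2 → y j = y' j) →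
      u * (y j1 - y' j1) + v * (y j2 - y' j2) = 0) :
    ((((Fintype.piFinset fun _ : Fin m => Finset.Icc (-B) B)).filter Q).card : ℝ)
      ≤ (Finset.Icc (-B) B).card ^ (m-2) * (2*B*(Int.gcd u v)/(|u| : ℤ) + 2) := by
  classical
  have hgcd0 : 0 < Int.gcd u v := Int.gcd_pos_of_ne_zero_left v hu
  set g : ℤ := (Int.gcd u v : ℤ) with hgdef
  have hg0 : 0 < g := by rw [hgdef]; exact_mod_cast hgcd0
  set qq : ℤ := u / g with hqq
  have hgu : g ∣ u := Int.gcd_dvd_left u v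
  have hgv : g ∣ v := Int.gcd_dvd_right u v
  have hqqu : qq * g = u := Int.ediv_mul_cancel hgu
  have hqq0 : qq ≠ 0 := by
    rintro h0; rw [h0, zero_mul] at hqqu; exact hu hqqu.symm
  have habs : 1 ≤ |qq| := Int.one_le_abs hqq0
  have haR : (0:ℝ) < ((|qq| : ℤ) : ℝ) := by exact_mod_cast habs
  set s := ((Fintype.piFinset fun _ : Fin m => Finset.Icc (-B) B)).filter Q with hs
  set t := (Fintype.piFinset fun _ : {j : Fin m // j ≠ j1 ∧ j ≠ j2} => Finset.Icc (-B) B) with ht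
  have hmaps : ∀ y ∈ s, (fun (j : {j : Fin m // j ≠ j1 ∧ j ≠ j2}) => y j.1) ∈ t := by
    intro y hy
    rw [hs, Finset.mem_filter] at hy
    rw [ht, Fintype.mem_piFinset]
    exact fun j => (Fintype.mem_piFinset.1 hy.1) j.1
  have hcard := Finset.card_eq_sum_card_fiberwise hmaps
  have hfib : ∀ r ∈ t, ((s.filter (fun y => (fun (j : {j : Fin m // j ≠ j1 ∧ j ≠ j2}) => y j.1) = r)).card : ℝ)
      ≤ 2*B/((|qq| : ℤ) : ℝ) + 2 := by
    intro r _
    have hBnn : (0:ℝ) ≤ 2*(B:ℝ) := by exact_mod_cast (by linarith : (0:ℤ) ≤ 2*B)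
    rcases Finset.eq_empty_or_nonempty (s.filter (fun y => (fun (j : {j : Fin m // j ≠ j1 ∧ j ≠ j2}) => y j.1) = r)) with he | ⟨y0, hy0⟩
    · rw [he]
      simp only [Finset.card_empty, Nat.cast_zero]
      have := div_nonneg hBnn haR.le
      linarith
    · have hle := Finset.card_le_card_of_injOn (fun y => y j2)
        (s := s.filter (fun y => (fun (j : {j : Fin m // j ≠ j1 ∧ j ≠ j2}) => y j.1) = r))
        (t := (Finset.Icc (-B) B).filter (fun t' => |qq| ∣ (t' - y0 j2)))
        ?_ ?_
      · calc _ ≤ (((Finset.Icc (-B) B).filter (fun t' => |qq| ∣ (t' - y0 j2))).card : ℝ) := by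
              exact_mod_cast hle
          _ ≤ _ := ap_count B (by linarith) habs _
      · intro y hy
        rw [Finset.mem_coe, Finset.mem_filter] at hy ⊢
        obtain ⟨hys, hyr⟩ := hy
        rw [hs, Finset.mem_filter] at hys
        rw [Finset.mem_filter] at hy0
        obtain ⟨hy0s, hy0r⟩ := hy0
        rw [hs, Finset.mem_filter] at hy0s
        refine ⟨(Fintype.mem_piFinset.1 hys.1) j2, ?_⟩
        have hagree : ∀ j, j ≠ j1 → j ≠ j2 → y j = y0 j := by
          intro j h1 h2
          have t1 := congrFun hyr ⟨j, h1, h2⟩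
          have t2 := congrFun hy0r ⟨j, h1, h2⟩
          simp only at t1 t2
          rw [t1, t2]
        have heq := hQ y hys.2 y0 hy0s.2 hagree
        have hv' : (v/g) * g = v := Int.ediv_mul_cancel hgv
        have hkey : g * (qq * (y j1 - y0 j1) + (v/g) * (y j2 - y0 j2)) = 0 := by
          linear_combination (y j1 - y0 j1) * hqqu + (y j2 - y0 j2) * hv' + heq
        have hkey2 : qq * (y j1 - y0 j1) + (v/g) * (y j2 - y0 j2) = 0 :=
          (mul_eq_zero.1 hkey).resolve_left hg0.ne'
        have hdvd : qq ∣ (v/g) * (y j2 - y0 j2) := ⟨-(y j1 - y0 j1), by linear_combination hkey2⟩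
        have hco : Int.gcd qq (v/g) = 1 := by
          rw [hqq, hgdef]; exact Int.gcd_div_gcd_div_gcd hgcd0
        have hres : qq ∣ (y j2 - y0 j2) := Int.dvd_of_dvd_mul_right_of_gcd_one hdvd hco
        exact (abs_dvd _ _).2 hres
      · intro y hy y' hy' hj2eq
        have hj2eq' : y j2 = y' j2 := hj2eq
        simp only [coe_filter, Set.mem_setOf_eq] at hy hy'
        obtain ⟨hys, hyr⟩ := hy
        obtain ⟨hy's, hy'r⟩ := hy'
        rw [hs, Finset.mem_filter] at hys hy's
        have hagree : ∀ j, j ≠ j1 → j ≠ j2 → y j = y' j := by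
          intro j h1 h2
          have t1 := congrFun hyr ⟨j, h1, h2⟩
          have t2 := congrFun hy'r ⟨j, h1, h2⟩
          simp only at t1 t2
          rw [t1, t2]
        have heq := hQ y hys.2 y' hy's.2 hagree
        have hd2 : y j2 - y' j2 = 0 := by rw [hj2eq']; ring
        rw [hd2, mul_zero, add_zero, mul_eq_zero] at heq
        have hd1 := heq.resolve_left hu
        funext j
        by_cases h1 : j = j1
        · subst h1; linarith
        by_cases h2 : j = j2
        · subst h2; linarith
        · exact hagree j h1 h2
  have htcard : (t.card : ℝ) = ((Finset.Icc (-B) B).card : ℝ) ^ (m-2) := by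
    rw [ht, Fintype.card_piFinset, Finset.prod_const, card_univ, card_ne_pair hj]
    push_cast; ring
  have hcR : ((s.card : ℝ)) = ∑ r ∈ t, ((s.filter (fun y => (fun (j : {j : Fin m // j ≠ j1 ∧ j ≠ j2}) => y j.1) = r)).card : ℝ) := by
    rw [hcard]; push_cast; rfl
  have hsum : ((s.card : ℝ)) ≤ (t.card : ℝ) * (2*B/((|qq| : ℤ):ℝ) + 2) := by
    rw [hcR]
    calc _ ≤ ∑ _r ∈ t, (2*(B:ℝ)/((|qq| : ℤ):ℝ) + 2) := Finset.sum_le_sum hfib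
      _ = _ := by rw [Finset.sum_const, nsmul_eq_mul]
  have habsu : ((|u| : ℤ):ℝ) = ((g : ℤ):ℝ) * ((|qq| : ℤ):ℝ) := by
    have : |u| = g * |qq| := by rw [← hqqu, abs_mul, abs_of_pos hg0]; ring
    exact_mod_cast congrArg (Int.cast : ℤ → ℝ) this
  have hgR : ((g : ℤ):ℝ) ≠ 0 := by
    have : (0:ℝ) < ((g:ℤ):ℝ) := by exact_mod_cast hg0
    linarith
  have hfinal : 2*(B:ℝ)/((|qq| : ℤ):ℝ) + 2 = 2*(B:ℝ)*(Int.gcd u v : ℕ)/((|u| : ℤ):ℝ) + 2 := by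
    have hgg : ((Int.gcd u v : ℕ) : ℝ) = ((g : ℤ):ℝ) := by rw [hgdef]; push_cast; ring
    rw [hgg, habsu]
    field_simp
  calc ((s.card : ℝ)) ≤ (t.card : ℝ) * (2*B/((|qq| : ℤ):ℝ) + 2) := hsum
    _ = ((Finset.Icc (-B) B).card : ℝ) ^ (m-2) * (2*(B:ℝ)*(Int.gcd u v : ℕ)/((|u| : ℤ):ℝ) + 2) := by
        rw [htcard, hfinal]

lemma inv_max_sum (Z : ℤ) (hZ : 0 ≤ Z) :
    ∑ p ∈ (Finset.Icc (-Z) Z) ×ˢ (Finset.Icc (-Z) Z),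
      (((max |p.1| |p.2| : ℤ) : ℝ))⁻¹ ≤ 6*(2*Z+1) := by
  classical
  set f : ℤ → ℤ → ℝ := fun u v => if |v| ≤ |u| ∧ u ≠ 0 then ((|u| : ℤ) : ℝ)⁻¹ else 0 with hf
  have hfnn : ∀ u v, 0 ≤ f u v := by
    intro u v; rw [hf]; dsimp only; split
    · positivity
    · exact le_rfl
  have hpt : ∀ u v : ℤ, (((max |u| |v| : ℤ) : ℝ))⁻¹ ≤ f u v + f v u := by
    intro u v
    rcases le_or_gt |v| |u| with h | h
    · rcases eq_or_ne u 0 with rfl | hu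
      · have hv : v = 0 := by simpa using h
        subst hv; simp [hf]
      · rw [max_eq_left h, hf]; dsimp only
        rw [if_pos ⟨h, hu⟩]
        have := hfnn v u
        simp only [hf] at this ⊢
        linarith
    · have hv : v ≠ 0 := by
        rintro rfl; simp only [abs_zero] at h; exact absurd h (abs_nonneg u).not_gt
      rw [max_eq_right h.le, hf]; dsimp only
      rw [if_neg (by rintro ⟨h1, -⟩; exact absurd h1 h.not_ge), if_pos ⟨h.le, hv⟩]
      simp
  have hrow : ∀ u : ℤ, ∑ v ∈ Finset.Icc (-Z) Z, f u v ≤ 3 := by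
    intro u
    rcases eq_or_ne u 0 with rfl | hu
    · simp [hf]
    · have habs : 1 ≤ |u| := Int.one_le_abs hu
      have haR : (1:ℝ) ≤ ((|u| : ℤ):ℝ) := by exact_mod_cast habs
      calc ∑ v ∈ Finset.Icc (-Z) Z, f u v
          = ∑ v ∈ (Finset.Icc (-Z) Z).filter (fun v => |v| ≤ |u| ∧ u ≠ 0), ((|u| : ℤ):ℝ)⁻¹ := by
            rw [Finset.sum_filter]
        _ ≤ ((Finset.Icc (-(|u|)) (|u|)).card : ℝ) * ((|u| : ℤ):ℝ)⁻¹ := by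
            rw [← nsmul_eq_mul, ← Finset.sum_const]
            apply Finset.sum_le_sum_of_subset_of_nonneg
            · intro v hv
              rw [Finset.mem_filter] at hv
              rw [Finset.mem_Icc]
              have h2 := hv.2.1
              constructor
              · linarith [neg_abs_le v, h2]
              · linarith [le_abs_self v, h2]
            · intros; positivity
        _ ≤ 3 := by
            rw [Int.card_Icc]
            rw [show (((|u| + 1 - -|u|).toNat : ℕ) : ℝ) = ((2*|u| + 1 : ℤ) : ℝ) by
              rw [show |u| + 1 - -|u| = 2*|u| + 1 by ring]
              exact_mod_cast congrArg (Int.cast : ℤ → ℝ) (Int.toNat_of_nonneg (by omega))]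
            rw [inv_eq_one_div, mul_one_div, div_le_iff₀ (by linarith)]
            push_cast
            have h1R : (1:ℝ) ≤ |(u:ℝ)| := by exact_mod_cast habs
            linarith
  have hcardZ : ((Finset.Icc (-Z) Z).card : ℝ) ≤ 2*Z+1 := by
    rw [Int.card_Icc]
    rw [show (((Z + 1 - -Z).toNat : ℕ) : ℝ) = ((2*Z + 1 : ℤ) : ℝ) by
      rw [show Z + 1 - -Z = 2*Z + 1 by ring]
      exact_mod_cast congrArg (Int.cast : ℤ → ℝ) (Int.toNat_of_nonneg (by omega))]
    push_cast; linarith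
  have hcardnn : (0:ℝ) ≤ ((Finset.Icc (-Z) Z).card : ℝ) := by positivity
  calc ∑ p ∈ (Finset.Icc (-Z) Z) ×ˢ (Finset.Icc (-Z) Z), (((max |p.1| |p.2| : ℤ) : ℝ))⁻¹
      ≤ ∑ p ∈ (Finset.Icc (-Z) Z) ×ˢ (Finset.Icc (-Z) Z), (f p.1 p.2 + f p.2 p.1) :=
        Finset.sum_le_sum (fun p _ => hpt p.1 p.2)
    _ = (∑ u ∈ Finset.Icc (-Z) Z, ∑ v ∈ Finset.Icc (-Z) Z, f u v)
        + ∑ u ∈ Finset.Icc (-Z) Z, ∑ v ∈ Finset.Icc (-Z) Z, f v u := by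
        rw [← Finset.sum_add_distrib]
        rw [Finset.sum_product]
        exact Finset.sum_congr rfl (fun u _ => by rw [← Finset.sum_add_distrib])
    _ = (∑ u ∈ Finset.Icc (-Z) Z, ∑ v ∈ Finset.Icc (-Z) Z, f u v)
        + ∑ u ∈ Finset.Icc (-Z) Z, ∑ v ∈ Finset.Icc (-Z) Z, f u v := by
        have hswap : ∑ u ∈ Finset.Icc (-Z) Z, ∑ v ∈ Finset.Icc (-Z) Z, f v u
            = ∑ u ∈ Finset.Icc (-Z) Z, ∑ v ∈ Finset.Icc (-Z) Z, f u v := Finset.sum_comm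
        rw [hswap]
    _ ≤ ((Finset.Icc (-Z) Z).card : ℝ) * 3 + ((Finset.Icc (-Z) Z).card : ℝ) * 3 := by
        gcongr ?_ + ?_ <;>
        · calc _ ≤ ∑ _u ∈ Finset.Icc (-Z) Z, (3:ℝ) := Finset.sum_le_sum (fun u _ => hrow u)
            _ = _ := by rw [Finset.sum_const, nsmul_eq_mul]
    _ ≤ (2*Z+1) * 3 + (2*Z+1) * 3 := by
        have h3 : (0:ℝ) ≤ 3 := by norm_num
        nlinarith
    _ = 6*(2*Z+1) := by ring

lemma harmonic_Icc (Y : ℤ) (hY : 1 ≤ Y) :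
    ∑ g ∈ Finset.Icc (1:ℤ) Y, ((g:ℝ))⁻¹ ≤ 1 + Real.log Y := by
  have hinj : Function.Injective (fun n : ℕ => (n:ℤ)+1) := by intro a b h; simpa using h
  have hmap : Finset.Icc (1:ℤ) Y = (Finset.range Y.toNat).map
      ⟨fun n : ℕ => (n:ℤ)+1, hinj⟩ := by
    ext g
    simp only [Finset.mem_Icc, Finset.mem_map, Finset.mem_range, Function.Embedding.coeFn_mk]
    constructor
    · intro ⟨h1, h2⟩; exact ⟨(g-1).toNat, by omega, by omega⟩
    · rintro ⟨n, hn, rfl⟩; omega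
  rw [hmap, Finset.sum_map]
  simp only [Function.Embedding.coeFn_mk]
  have heq : ((harmonic Y.toNat : ℚ) : ℝ) = ∑ n ∈ Finset.range Y.toNat, (((n:ℤ)+1 : ℤ) : ℝ)⁻¹ := by
    rw [harmonic]
    push_cast
    rfl
  rw [← heq]
  calc ((harmonic Y.toNat : ℚ) : ℝ) ≤ 1 + Real.log (Y.toNat) := harmonic_le_one_add_log _
    _ = 1 + Real.log Y := by
      congr 2
      exact_mod_cast congrArg (Int.cast : ℤ → ℝ) (Int.toNat_of_nonneg (by omega))

lemma gcd_max_sum (Y : ℤ) (hY : 1 ≤ Y) :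
    ∑ p ∈ (Finset.Icc (-Y) Y) ×ˢ (Finset.Icc (-Y) Y),
      ((Int.gcd p.1 p.2 : ℕ) : ℝ) / (((max |p.1| |p.2| : ℤ)):ℝ)
      ≤ 24 * Y * (1 + Real.log Y) := by
  classical
  set P := (Finset.Icc (-Y) Y) ×ˢ (Finset.Icc (-Y) Y) with hP
  set F : ℤ × ℤ → ℝ := fun p => ((Int.gcd p.1 p.2 : ℕ) : ℝ) / (((max |p.1| |p.2| : ℤ)):ℝ) with hF
  set W : ℤ × (ℤ × ℤ) → ℝ := fun q =>
    if |q.1 * q.2.1| ≤ Y ∧ |q.1 * q.2.2| ≤ Y then (((max |q.2.1| |q.2.2| : ℤ)):ℝ)⁻¹ else 0 with hW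
  have hWnn : ∀ q, 0 ≤ W q := by
    intro q; rw [hW]; dsimp only; split
    · positivity
    · exact le_rfl
  set φ : ℤ × ℤ → ℤ × (ℤ × ℤ) := fun p =>
    ((Int.gcd p.1 p.2 : ℤ), (p.1 / (Int.gcd p.1 p.2 : ℤ), p.2 / (Int.gcd p.1 p.2 : ℤ))) with hφ
  -- step A
  have hA : ∑ p ∈ P, F p = ∑ p ∈ P.filter (fun p => p ≠ (0,0)), F p := by
    symm
    apply Finset.sum_filter_of_ne
    intro p _ hne
    rintro rfl
    rw [hF] at hne
    simp at hne
  -- facts for p ∈ P'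
  have hfacts : ∀ p ∈ P.filter (fun p => p ≠ (0,0)),
      0 < Int.gcd p.1 p.2 ∧ (p.1 / (Int.gcd p.1 p.2 : ℤ)) * (Int.gcd p.1 p.2 : ℤ) = p.1
        ∧ (p.2 / (Int.gcd p.1 p.2 : ℤ)) * (Int.gcd p.1 p.2 : ℤ) = p.2 := by
    intro p hp
    rw [Finset.mem_filter] at hp
    have hne : ¬(p.1 = 0 ∧ p.2 = 0) := by
      intro ⟨h1, h2⟩; exact hp.2 (Prod.ext h1 h2)
    have hg : 0 < Int.gcd p.1 p.2 := by
      rcases Decidable.em (p.1 = 0) with h1 | h1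
      · exact Int.gcd_pos_of_ne_zero_right p.1 (fun h2 => hne ⟨h1, h2⟩)
      · exact Int.gcd_pos_of_ne_zero_left p.2 h1
    exact ⟨hg, Int.ediv_mul_cancel (Int.gcd_dvd_left _ _), Int.ediv_mul_cancel (Int.gcd_dvd_right _ _)⟩
  -- step B : F p = W (φ p) on P'
  have hFW : ∀ p ∈ P.filter (fun p => p ≠ (0,0)), F p = W (φ p) := by
    intro p hp
    obtain ⟨hg, he1, he2⟩ := hfacts p hp
    rw [Finset.mem_filter] at hp
    have hpP := hp.1
    rw [hP, Finset.mem_product, Finset.mem_Icc, Finset.mem_Icc] at hpP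
    have habs1 : |p.1| ≤ Y := abs_le.2 hpP.1
    have habs2 : |p.2| ≤ Y := abs_le.2 hpP.2
    set g : ℤ := (Int.gcd p.1 p.2 : ℤ) with hgdef
    have hg0 : (0:ℤ) < g := by rw [hgdef]; exact_mod_cast hg
    have habs1' : |g * (p.1 / g)| = |p.1| := by rw [mul_comm, he1]
    have habs2' : |g * (p.2 / g)| = |p.2| := by rw [mul_comm, he2]
    have hcond : |g * (p.1 / g)| ≤ Y ∧ |g * (p.2 / g)| ≤ Y := by
      rw [habs1', habs2']; exact ⟨habs1, habs2⟩
    have hmax : max |p.1| |p.2| = g * max |p.1 / g| |p.2 / g| := by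
      rw [mul_max_of_nonneg _ _ hg0.le]
      rw [← habs1', ← habs2', abs_mul, abs_mul, abs_of_pos hg0]
    -- max' ≥ 1
    have hmax' : 1 ≤ max |p.1 / g| |p.2 / g| := by
      by_contra hcon
      push_neg at hcon
      have h1 : |p.1 / g| ≤ 0 := by have := le_max_left |p.1 / g| |p.2 / g|; omega
      have h2 : |p.2 / g| ≤ 0 := by have := le_max_right |p.1 / g| |p.2 / g|; omega
      have hz1 : p.1 / g = 0 := abs_eq_zero.1 (le_antisymm h1 (abs_nonneg _))
      have hz2 : p.2 / g = 0 := abs_eq_zero.1 (le_antisymm h2 (abs_nonneg _))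
      apply hp.2
      have hz1' : p.1 = 0 := by rw [← he1, hz1, zero_mul]
      have hz2' : p.2 = 0 := by rw [← he2, hz2, zero_mul]
      exact Prod.ext hz1' hz2'
    rw [hF, hW, hφ]
    dsimp only
    rw [if_pos hcond, hmax]
    have hgR : (0:ℝ) < ((g:ℤ):ℝ) := by exact_mod_cast hg0
    have hmR : (0:ℝ) < ((max |p.1 / g| |p.2 / g| : ℤ):ℝ) := by exact_mod_cast hmax'
    rw [show (((g * max (|p.1 / g|) (|p.2 / g|) : ℤ)):ℝ) = ((g:ℤ):ℝ) * ((max (|p.1 / g|) (|p.2 / g|) : ℤ):ℝ) by push_cast; ring]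
    rw [hgdef]
    push_cast
    rw [div_mul_eq_div_div]
    rw [div_self (Nat.cast_ne_zero.2 hg.ne' : ((Int.gcd p.1 p.2 : ℕ):ℝ) ≠ 0)]
    rw [one_div]
  -- injectivity
  have hinj : ∀ p ∈ P.filter (fun p => p ≠ (0,0)), ∀ p' ∈ P.filter (fun p => p ≠ (0,0)),
      φ p = φ p' → p = p' := by
    intro p hp p' hp' heq
    obtain ⟨_, he1, he2⟩ := hfacts p hp
    obtain ⟨_, he1', he2'⟩ := hfacts p' hp'
    rw [hφ] at heq
    have hg : (Int.gcd p.1 p.2 : ℤ) = (Int.gcd p'.1 p'.2 : ℤ) := congrArg Prod.fst heq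
    have h1 : p.1 / (Int.gcd p.1 p.2 : ℤ) = p'.1 / (Int.gcd p'.1 p'.2 : ℤ) :=
      congrArg (fun q => q.2.1) heq
    have h2 : p.2 / (Int.gcd p.1 p.2 : ℤ) = p'.2 / (Int.gcd p'.1 p'.2 : ℤ) :=
      congrArg (fun q => q.2.2) heq
    apply Prod.ext
    · rw [← he1, ← he1', h1, hg]
    · rw [← he2, ← he2', h2, hg]
  -- image subset
  have himg : ∀ p ∈ P.filter (fun p => p ≠ (0,0)), φ p ∈ (Finset.Icc (1:ℤ) Y) ×ˢ P := by
    intro p hp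
    obtain ⟨hg, he1, he2⟩ := hfacts p hp
    rw [Finset.mem_filter] at hp
    have hpP := hp.1
    rw [hP, Finset.mem_product, Finset.mem_Icc, Finset.mem_Icc] at hpP
    have habs1 : |p.1| ≤ Y := abs_le.2 hpP.1
    have habs2 : |p.2| ≤ Y := abs_le.2 hpP.2
    set g : ℤ := (Int.gcd p.1 p.2 : ℤ) with hgdef
    have hg0 : (0:ℤ) < g := by rw [hgdef]; exact_mod_cast hg
    have hgY : g ≤ Y := by
      rcases Decidable.em (p.1 = 0) with h1 | h1
      · have h2 : p.2 ≠ 0 := fun h2 => hp.2 (Prod.ext h1 h2)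
        have : g ∣ |p.2| := (dvd_abs _ _).2 (Int.gcd_dvd_right _ _)
        exact le_trans (Int.le_of_dvd (abs_pos.2 h2) this) habs2
      · have : g ∣ |p.1| := (dvd_abs _ _).2 (Int.gcd_dvd_left _ _)
        exact le_trans (Int.le_of_dvd (abs_pos.2 h1) this) habs1
    have hq1 : |p.1 / g| ≤ Y := by
      have hh : g * |p.1 / g| = |p.1| := by
        conv_rhs => rw [← he1]
        rw [abs_mul, abs_of_pos hg0]; ring
      nlinarith [abs_nonneg (p.1 / g)]
    have hq2 : |p.2 / g| ≤ Y := by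
      have hh : g * |p.2 / g| = |p.2| := by
        conv_rhs => rw [← he2]
        rw [abs_mul, abs_of_pos hg0]; ring
      nlinarith [abs_nonneg (p.2 / g)]
    rw [hφ, Finset.mem_product, Finset.mem_Icc]
    refine ⟨⟨hg0, hgY⟩, ?_⟩
    rw [hP, Finset.mem_product, Finset.mem_Icc, Finset.mem_Icc]
    constructor
    · exact abs_le.1 hq1
    · exact abs_le.1 hq2
  -- combine B, C
  have hBC : ∑ p ∈ P, F p ≤ ∑ q ∈ (Finset.Icc (1:ℤ) Y) ×ˢ P, W q := by
    rw [hA]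
    rw [show ∑ p ∈ P.filter (fun p => p ≠ (0,0)), F p
        = ∑ p ∈ P.filter (fun p => p ≠ (0,0)), W (φ p) from Finset.sum_congr rfl hFW]
    rw [← Finset.sum_image hinj]
    apply Finset.sum_le_sum_of_subset_of_nonneg
    · intro q hq
      rw [Finset.mem_image] at hq
      obtain ⟨p, hp, rfl⟩ := hq
      exact himg p hp
    · intro q _ _
      exact hWnn q
  -- step D : per g bound
  have hD : ∀ g ∈ Finset.Icc (1:ℤ) Y, ∑ p' ∈ P, W (g, p') ≤ 12 * (Y:ℝ) * ((g:ℝ))⁻¹ + 6 := by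
    intro g hg
    rw [Finset.mem_Icc] at hg
    have hg0 : (0:ℤ) < g := hg.1
    set Z : ℤ := Y / g with hZ
    have hZ0 : 0 ≤ Z := Int.ediv_nonneg (by omega) (by omega)
    have hsub : ∑ p' ∈ P, W (g, p') ≤ ∑ p' ∈ (Finset.Icc (-Z) Z) ×ˢ (Finset.Icc (-Z) Z),
        (((max |p'.1| |p'.2| : ℤ)):ℝ)⁻¹ := by
      rw [show ∑ p' ∈ P, W (g, p')
          = ∑ p' ∈ P.filter (fun p' => |g * p'.1| ≤ Y ∧ |g * p'.2| ≤ Y),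
              (((max |p'.1| |p'.2| : ℤ)):ℝ)⁻¹ by
        rw [Finset.sum_filter]]
      apply Finset.sum_le_sum_of_subset_of_nonneg
      · intro p' hp'
        rw [Finset.mem_filter] at hp'
        have h1 : |p'.1| ≤ Z := by
          rw [hZ]
          rw [Int.le_ediv_iff_mul_le hg0]
          calc |p'.1| * g = |g * p'.1| := by rw [abs_mul, abs_of_pos hg0]; ring
            _ ≤ Y := hp'.2.1
        have h2 : |p'.2| ≤ Z := by
          rw [hZ]
          rw [Int.le_ediv_iff_mul_le hg0]
          calc |p'.2| * g = |g * p'.2| := by rw [abs_mul, abs_of_pos hg0]; ring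
            _ ≤ Y := hp'.2.2
        rw [Finset.mem_product, Finset.mem_Icc, Finset.mem_Icc]
        exact ⟨abs_le.1 h1, abs_le.1 h2⟩
      · intros; positivity
    have hZR : ((Z:ℤ):ℝ) ≤ (Y:ℝ) * ((g:ℝ))⁻¹ := by
      have h1 : Z * g ≤ Y := Int.ediv_mul_le Y hg0.ne'
      have h1R : ((Z:ℤ):ℝ) * ((g:ℤ):ℝ) ≤ (Y:ℝ) := by exact_mod_cast h1
      have hgR : (0:ℝ) < ((g:ℤ):ℝ) := by exact_mod_cast hg0
      rw [← div_eq_mul_inv, le_div_iff₀ hgR]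
      exact h1R
    calc ∑ p' ∈ P, W (g, p') ≤ _ := hsub
      _ ≤ 6*(2*(Z:ℝ)+1) := inv_max_sum Z hZ0
      _ ≤ 12 * (Y:ℝ) * ((g:ℝ))⁻¹ + 6 := by nlinarith
  -- final
  have hsplit : ∑ q ∈ (Finset.Icc (1:ℤ) Y) ×ˢ P, W q
      = ∑ g ∈ Finset.Icc (1:ℤ) Y, ∑ p' ∈ P, W (g, p') := by
    rw [Finset.sum_product]
  have hcardY : ((Finset.Icc (1:ℤ) Y).card : ℝ) ≤ (Y:ℝ) := by
    rw [Int.card_Icc]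
    rw [show (((Y + 1 - 1).toNat : ℕ) : ℝ) = ((Y:ℤ):ℝ) by
      rw [show Y + 1 - 1 = Y by ring]
      exact_mod_cast congrArg (Int.cast : ℤ → ℝ) (Int.toNat_of_nonneg (by omega))]
  have hYR : (1:ℝ) ≤ (Y:ℝ) := by exact_mod_cast hY
  have hlog : 0 ≤ Real.log Y := Real.log_nonneg hYR
  calc ∑ p ∈ P, F p ≤ ∑ q ∈ (Finset.Icc (1:ℤ) Y) ×ˢ P, W q := hBC
    _ = ∑ g ∈ Finset.Icc (1:ℤ) Y, ∑ p' ∈ P, W (g, p') := hsplit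
    _ ≤ ∑ g ∈ Finset.Icc (1:ℤ) Y, (12 * (Y:ℝ) * ((g:ℝ))⁻¹ + 6) := Finset.sum_le_sum hD
    _ = 12 * (Y:ℝ) * (∑ g ∈ Finset.Icc (1:ℤ) Y, ((g:ℝ))⁻¹) + 6 * ((Finset.Icc (1:ℤ) Y).card : ℝ) := by
        rw [Finset.sum_add_distrib, Finset.mul_sum, Finset.sum_const, nsmul_eq_mul]
        ring
    _ ≤ 12 * (Y:ℝ) * (1 + Real.log Y) + 6 * (Y:ℝ) := by
        have hh := harmonic_Icc Y hY
        have h12 : (0:ℝ) ≤ 12 * (Y:ℝ) := by linarith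
        nlinarith
    _ ≤ 24 * Y * (1 + Real.log Y) := by nlinarith

lemma exists_minor {k m : ℕ} (C : Matrix (Fin k) (Fin m) ℚ) (hrank : 2 ≤ C.rank) :
    ∃ i1 i2 j1 j2, C i1 j1 * C i2 j2 - C i1 j2 * C i2 j1 ≠ 0 := by
  by_contra hcon
  push_neg at hcon
  -- all 2x2 minors vanish
  rcases Classical.em (∃ i0 j0, C i0 j0 ≠ 0) with ⟨i0, j0, hne⟩ | hzero
  · set col : Fin k → ℚ := fun i => C i j0 with hcol
    have hcolspan : ∀ v, C.mulVec v ∈ Submodule.span ℚ {col} := by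
      intro v
      rw [Submodule.mem_span_singleton]
      refine ⟨(∑ j, v j * C i0 j) / C i0 j0, ?_⟩
      funext i
      have key : (∑ j, C i j * v j) * C i0 j0 = (∑ j, v j * C i0 j) * C i j0 := by
        rw [Finset.sum_mul, Finset.sum_mul]
        apply Finset.sum_congr rfl
        intro j _
        have hm := hcon i i0 j j0
        linear_combination v j * hm
      have : (C.mulVec v) i = ∑ j, C i j * v j := by
        simp [Matrix.mulVec, dotProduct]
      rw [Pi.smul_apply, hcol, this, smul_eq_mul]
      rw [div_mul_eq_mul_div, div_eq_iff hne]
      exact key.symm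
    have hle : LinearMap.range C.mulVecLin ≤ Submodule.span ℚ {col} := by
      rintro x ⟨v, rfl⟩
      exact hcolspan v
    have h1 : C.rank ≤ Module.finrank ℚ (Submodule.span ℚ {col}) := by
      rw [Matrix.rank]
      exact Submodule.finrank_mono hle
    have h2 : Module.finrank ℚ (Submodule.span ℚ ({col} : Set (Fin k → ℚ))) ≤ 1 := by
      rcases eq_or_ne col 0 with h | h
      · rw [h, Submodule.span_zero_singleton, finrank_bot]
        omega
      · rw [finrank_span_singleton h]
    omega
  · push_neg at hzero
    have hC : C = 0 := by
      ext i j; exact hzero i j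
    rw [hC, Matrix.rank_zero] at hrank
    omega

lemma clear_col {k m : ℕ} (C : Matrix (Fin k) (Fin m) ℚ) (j1 j2 : Fin m) :
    ∃ (N : ℕ) (b1 b2 : Fin k → ℤ), 0 < N ∧ (∀ i, (b1 i : ℚ) = N * C i j1) ∧
      (∀ i, (b2 i : ℚ) = N * C i j2) := by
  set N : ℕ := ∏ i : Fin k, ((C i j1).den * (C i j2).den) with hNdef
  have hN : 0 < N := Finset.prod_pos (fun i _ => Nat.mul_pos (C i j1).pos (C i j2).pos)
  have key : ∀ (q : ℚ), q.den ∣ N → ((q.num * ((N / q.den : ℕ) : ℤ) : ℤ) : ℚ) = N * q := by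
    intro q hd
    have hmul : ((N / q.den : ℕ) : ℚ) * (q.den : ℚ) = (N:ℚ) := by
      exact_mod_cast Nat.div_mul_cancel hd
    push_cast
    calc (q.num : ℚ) * ((N / q.den : ℕ) : ℚ) = (q * q.den) * ((N / q.den : ℕ) : ℚ) := by
          rw [Rat.mul_den_eq_num]
      _ = q * (((N / q.den : ℕ) : ℚ) * (q.den : ℚ)) := by ring
      _ = (N:ℚ) * q := by rw [hmul]; ring
  refine ⟨N, fun i => (C i j1).num * ((N / (C i j1).den : ℕ) : ℤ),
      fun i => (C i j2).num * ((N / (C i j2).den : ℕ) : ℤ), hN, ?_, ?_⟩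
  · intro i
    apply key
    exact dvd_trans (dvd_mul_right _ _) (Finset.dvd_prod_of_mem _ (mem_univ i))
  · intro i
    apply key
    exact dvd_trans (dvd_mul_left _ _) (Finset.dvd_prod_of_mem _ (mem_univ i))

set_option maxHeartbeats 2000000 in
/-- If `C` is a `k × m` rational matrix with `rank(C) ≥ 2`, then the
number of integer pairs `x, y` with `|x| ≤ X`, `|y| ≤ X` and `xᵀCy = 0` is
`≪_C X^{k+m-2} log X`. -/
theorem statement13 {k m : ℕ} (C : Matrix (Fin k) (Fin m) ℚ) (hrank : 2 ≤ C.rank) :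
    ∃ c : ℝ, 0 < c ∧ ∀ X : ℝ, 2 ≤ X →
      ((((Fintype.piFinset fun _ : Fin k => Finset.Icc (-⌊X⌋) ⌊X⌋) ×ˢ
          (Fintype.piFinset fun _ : Fin m => Finset.Icc (-⌊X⌋) ⌊X⌋)).filter
            (fun p : (Fin k → ℤ) × (Fin m → ℤ) =>
              ∑ i, ∑ j, C i j * (p.1 i : ℚ) * (p.2 j : ℚ) = 0)).card : ℝ) ≤
        c * X ^ ((k : ℝ) + (m : ℝ) - 2) * Real.log X := by
  classical
  have hk2 : 2 ≤ k := le_trans hrank (le_trans (Matrix.rank_le_card_height C) (by simp))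
  have hm2 : 2 ≤ m := le_trans hrank (le_trans (Matrix.rank_le_card_width C) (by simp))
  obtain ⟨i1, i2, j1, j2, hminor⟩ := exists_minor C hrank
  have hj12 : j1 ≠ j2 := by rintro rfl; exact hminor (by ring)
  obtain ⟨N, b1, b2, hN, hb1, hb2⟩ := clear_col C j1 j2
  have hNQ : ((N:ℕ):ℚ) ≠ 0 := Nat.cast_ne_zero.2 hN.ne'
  have hbminor : b1 i1 * b2 i2 - b1 i2 * b2 i1 ≠ 0 := by
    intro h0
    apply hminor
    have h1 : ((b1 i1 * b2 i2 - b1 i2 * b2 i1 : ℤ) : ℚ) = 0 := by rw [h0]; simp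
    push_cast at h1
    rw [hb1 i1, hb2 i2, hb1 i2, hb2 i1] at h1
    apply mul_left_cancel₀ (pow_ne_zero 2 hNQ)
    rw [mul_zero]
    linear_combination h1
  -- constants
  set K : ℤ := (∑ i, |b1 i|) + (∑ i, |b2 i|) + 1 with hKdef
  have hK1 : 1 ≤ K := by
    have h1 : 0 ≤ ∑ i, |b1 i| := Finset.sum_nonneg (fun i _ => abs_nonneg _)
    have h2 : 0 ≤ ∑ i, |b2 i| := Finset.sum_nonneg (fun i _ => abs_nonneg _)
    omega
  have hKR1 : (1:ℝ) ≤ ((K:ℤ):ℝ) := by exact_mod_cast hK1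
  have hlog2 : (0:ℝ) < Real.log 2 := Real.log_pos (by norm_num)
  have hlogK : (0:ℝ) ≤ Real.log K := Real.log_nonneg hKR1
  set c2 : ℝ := (1 + Real.log K) / Real.log 2 + 1 with hc2def
  have hc2 : 0 < c2 := by positivity
  set cfinal : ℝ := 3^(k+m) * (48 * ((K:ℤ):ℝ) * c2 + 3 / Real.log 2) + 1 with hcf
  refine ⟨cfinal, by positivity, ?_⟩
  intro X hX
  set B : ℤ := ⌊X⌋ with hBdef
  have hB1 : 1 ≤ B := by
    rw [hBdef]
    exact Int.le_floor.mpr (by push_cast; linarith)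
  have hBX : (B:ℝ) ≤ X := Int.floor_le X
  have hXpos : (0:ℝ) < X := by linarith
  have hX1 : (1:ℝ) ≤ X := by linarith
  set boxK := Fintype.piFinset fun _ : Fin k => Finset.Icc (-B) B with hboxK
  set boxM := Fintype.piFinset fun _ : Fin m => Finset.Icc (-B) B with hboxM
  set Pp : (Fin k → ℤ) × (Fin m → ℤ) → Prop :=
    fun p => ∑ i, ∑ j, C i j * (p.1 i : ℚ) * (p.2 j : ℚ) = 0 with hPp
  set S := (boxK ×ˢ boxM).filter Pp with hS
  show (S.card : ℝ) ≤ cfinal * X ^ ((k : ℝ) + (m : ℝ) - 2) * Real.log X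
  -- basic facts
  set cB : ℝ := ((Finset.Icc (-B) B).card : ℝ) with hcBdef
  have hcBval : cB = 2*(B:ℝ)+1 := by
    rw [hcBdef, Int.card_Icc]
    rw [show (((B + 1 - -B).toNat : ℕ) : ℝ) = ((2*B + 1 : ℤ) : ℝ) by
      rw [show B + 1 - -B = 2*B + 1 by ring]
      exact_mod_cast congrArg (Int.cast : ℤ → ℝ) (Int.toNat_of_nonneg (by omega))]
    push_cast; ring
  have hcB0 : 0 ≤ cB := by rw [hcBdef]; positivity
  have hcB3X : cB ≤ 3*X := by
    rw [hcBval]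
    have : (B:ℝ) ≤ X := hBX
    linarith
  -- u, v linear forms
  set uf : (Fin k → ℤ) → ℤ := fun x => ∑ i, b1 i * x i with huf
  set vf : (Fin k → ℤ) → ℤ := fun x => ∑ i, b2 i * x i with hvf
  set G : ℤ × ℤ → ℝ := fun p => ((Int.gcd p.1 p.2 : ℕ) : ℝ) / (((max |p.1| |p.2| : ℤ)):ℝ) with hG
  have hGnn : ∀ p, 0 ≤ G p := by
    intro p; rw [hG]; dsimp only
    apply div_nonneg (by positivity)
    have : (0:ℤ) ≤ max |p.1| |p.2| := le_trans (abs_nonneg _) (le_max_left _ _)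
    exact_mod_cast this
  -- key: the bilinear relation for fixed x
  have hQkey : ∀ x : Fin k → ℤ, ∀ y y' : Fin m → ℤ, Pp (x, y) → Pp (x, y') →
      (∀ j, j ≠ j1 → j ≠ j2 → y j = y' j) →
      (uf x) * (y j1 - y' j1) + (vf x) * (y j2 - y' j2) = 0 := by
    intro x y y' hy hy' hagree
    set w : Fin m → ℚ := fun j => ∑ i, C i j * (x i : ℚ) with hw
    have hsum : ∀ y0 : Fin m → ℤ, Pp (x, y0) → ∑ j, w j * (y0 j : ℚ) = 0 := by
      intro y0 hy0
      rw [hPp] at hy0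
      dsimp only at hy0
      rw [← hy0, Finset.sum_comm]
      apply Finset.sum_congr rfl
      intro j _
      rw [hw]
      dsimp only
      rw [Finset.sum_mul]
    have hdiff : ∑ j, w j * ((y j : ℚ) - (y' j : ℚ)) = 0 := by
      have h1 := hsum y hy
      have h2 := hsum y' hy'
      have : ∑ j, w j * ((y j : ℚ) - (y' j : ℚ))
          = (∑ j, w j * (y j : ℚ)) - ∑ j, w j * (y' j : ℚ) := by
        rw [← Finset.sum_sub_distrib]
        apply Finset.sum_congr rfl
        intros; ring
      rw [this, h1, h2, sub_self]
    have hzz : ∀ j, j ≠ j1 → j ≠ j2 → ((y j : ℚ) - (y' j : ℚ)) = 0 := by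
      intro j h1 h2
      rw [hagree j h1 h2, sub_self]
    have hred : w j1 * ((y j1 : ℚ) - (y' j1 : ℚ)) + w j2 * ((y j2 : ℚ) - (y' j2 : ℚ)) = 0 := by
      rw [← sum_two_support hj12 w _ hzz, hdiff]
    -- multiply by N
    have hNu : ((uf x : ℤ) : ℚ) = (N:ℚ) * w j1 := by
      rw [huf, hw]
      dsimp only
      push_cast
      rw [Finset.mul_sum]
      apply Finset.sum_congr rfl
      intro i _
      rw [hb1 i]; ring
    have hNv : ((vf x : ℤ) : ℚ) = (N:ℚ) * w j2 := by
      rw [hvf, hw]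
      dsimp only
      push_cast
      rw [Finset.mul_sum]
      apply Finset.sum_congr rfl
      intro i _
      rw [hb2 i]; ring
    have hfin : (((uf x) * (y j1 - y' j1) + (vf x) * (y j2 - y' j2) : ℤ) : ℚ) = 0 := by
      have hcast : (((uf x) * (y j1 - y' j1) + (vf x) * (y j2 - y' j2) : ℤ) : ℚ)
          = ((uf x : ℤ):ℚ) * ((y j1 : ℚ) - (y' j1 : ℚ)) + ((vf x : ℤ):ℚ) * ((y j2 : ℚ) - (y' j2 : ℚ)) := by
        push_cast; ring
      rw [hcast, hNu, hNv]
      linear_combination ((N:ℕ):ℚ) * hred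
    exact_mod_cast hfin
  -- per-x bound on the y-count
  have hperx : ∀ x ∈ boxK, (((boxM.filter (fun y => Pp (x,y))).card : ℝ))
      ≤ cB^(m-2) * (2*(B:ℝ)*G (uf x, vf x) + 2)
        + (if uf x = 0 ∧ vf x = 0 then cB^m else 0) := by
    intro x hx
    by_cases huv : uf x = 0 ∧ vf x = 0
    · rw [if_pos huv]
      have h1 : (boxM.filter (fun y => Pp (x,y))).card ≤ boxM.card := Finset.card_filter_le _ _
      have h2 : (boxM.card : ℝ) = cB^m := by
        rw [hboxM, Fintype.card_piFinset, Finset.prod_const, card_univ, Fintype.card_fin, hcBdef]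
        push_cast; ring
      have h3 : 0 ≤ cB^(m-2) * (2*(B:ℝ)*G (uf x, vf x) + 2) := by
        have := hGnn (uf x, vf x)
        have hB0 : (0:ℝ) ≤ (B:ℝ) := by exact_mod_cast (by omega : (0:ℤ) ≤ B)
        positivity
      calc (((boxM.filter (fun y => Pp (x,y))).card : ℝ)) ≤ (boxM.card : ℝ) := by exact_mod_cast h1
        _ = cB^m := h2
        _ ≤ _ := by linarith
    · rw [if_neg huv]
      rw [add_zero]
      have hQ := fun y hy y' hy' hagree => hQkey x y y' hy hy' hagree
      rcases le_or_gt |vf x| |uf x| with hc | hc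
      · have hu : uf x ≠ 0 := by
          intro h0
          apply huv
          constructor
          · exact h0
          · rw [h0, abs_zero] at hc
            have := abs_nonneg (vf x)
            have : |vf x| = 0 := le_antisymm hc this
            exact abs_eq_zero.1 this
        have hyc := ycount B hB1 hj12 hu (fun y => Pp (x, y)) hQ
        have hmax : max |uf x| |vf x| = |uf x| := max_eq_left hc
        calc (((boxM.filter (fun y => Pp (x,y))).card : ℝ))
            ≤ (Finset.Icc (-B) B).card ^ (m-2) * (2*(B:ℝ)*(Int.gcd (uf x) (vf x))/((|uf x| : ℤ):ℝ) + 2) := hyc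
          _ = cB^(m-2) * (2*(B:ℝ)*G (uf x, vf x) + 2) := by
              rw [hG]
              dsimp only
              rw [hmax, hcBdef]
              push_cast
              rw [mul_div_assoc]
      · have hv : vf x ≠ 0 := by
          intro h0
          rw [h0, abs_zero] at hc
          exact absurd hc (abs_nonneg _).not_gt
        have hQ' : ∀ y, Pp (x, y) → ∀ y', Pp (x, y') →
            (∀ j, j ≠ j2 → j ≠ j1 → y j = y' j) →
            (vf x) * (y j2 - y' j2) + (uf x) * (y j1 - y' j1) = 0 := by
          intro y hy y' hy' hagree
          have := hQkey x y y' hy hy' (fun j ha hb => hagree j hb ha)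
          linarith
        have hyc := ycount B hB1 hj12.symm hv (fun y => Pp (x, y)) hQ'
        have hmax : max |uf x| |vf x| = |vf x| := max_eq_right hc.le
        calc (((boxM.filter (fun y => Pp (x,y))).card : ℝ))
            ≤ (Finset.Icc (-B) B).card ^ (m-2) * (2*(B:ℝ)*(Int.gcd (vf x) (uf x))/((|vf x| : ℤ):ℝ) + 2) := hyc
          _ = cB^(m-2) * (2*(B:ℝ)*G (uf x, vf x) + 2) := by
              rw [hG]
              dsimp only
              rw [hmax, hcBdef, Int.gcd_comm (vf x) (uf x)]
              push_cast
              rw [mul_div_assoc]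
  -- fiberwise decomposition of S over x
  have hmapsS : ∀ p ∈ S, p.1 ∈ boxK := by
    intro p hp
    rw [hS, Finset.mem_filter] at hp
    exact (Finset.mem_product.1 hp.1).1
  have hcard := Finset.card_eq_sum_card_fiberwise hmapsS
  have hfibeq : ∀ x ∈ boxK, (S.filter (fun p => p.1 = x)).card
      = (boxM.filter (fun y => Pp (x,y))).card := by
    intro x hx
    apply Finset.card_bij (fun p _ => p.2)
    · intro p hp
      rw [Finset.mem_filter] at hp
      obtain ⟨hpS, hp1⟩ := hp
      rw [hS, Finset.mem_filter] at hpS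
      rw [Finset.mem_filter]
      refine ⟨(Finset.mem_product.1 hpS.1).2, ?_⟩
      have : (x, p.2) = p := by rw [← hp1]
      rw [this]
      exact hpS.2
    · intro p hp p' hp' h2
      rw [Finset.mem_filter] at hp hp'
      exact Prod.ext (hp.2.trans hp'.2.symm) h2
    · intro y hy
      rw [Finset.mem_filter] at hy
      refine ⟨(x, y), ?_, rfl⟩
      rw [Finset.mem_filter, hS, Finset.mem_filter, Finset.mem_product]
      exact ⟨⟨⟨hx, hy.1⟩, hy.2⟩, rfl⟩
  have hcard2 : S.card = ∑ x ∈ boxK, (boxM.filter (fun y => Pp (x,y))).card := by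
    rw [hcard]; exact Finset.sum_congr rfl hfibeq
  have hScard : (S.card : ℝ) = ∑ x ∈ boxK, ((boxM.filter (fun y => Pp (x,y))).card : ℝ) := by
    rw [hcard2]; push_cast; rfl
  -- the G-sum
  set Y : ℤ := K * B with hYdef
  have hY1 : 1 ≤ Y := by nlinarith
  set PY := (Finset.Icc (-Y) Y) ×ˢ (Finset.Icc (-Y) Y) with hPY
  have hmapsG : ∀ x ∈ boxK, (uf x, vf x) ∈ PY := by
    intro x hx
    have hxB : ∀ i, |x i| ≤ B := by
      intro i
      have := (Fintype.mem_piFinset.1 hx) i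
      rw [Finset.mem_Icc] at this
      exact abs_le.2 this
    have hbnd : ∀ (b : Fin k → ℤ), (∑ i, |b i|) ≤ K - 1 → |∑ i, b i * x i| ≤ Y := by
      intro b hbK
      calc |∑ i, b i * x i| ≤ ∑ i, |b i * x i| := Finset.abs_sum_le_sum_abs _ _
        _ ≤ ∑ i, |b i| * B := by
            apply Finset.sum_le_sum
            intro i _
            rw [abs_mul]
            exact mul_le_mul_of_nonneg_left (hxB i) (abs_nonneg _)
        _ = (∑ i, |b i|) * B := by rw [Finset.sum_mul]
        _ ≤ K * B := by nlinarith [hbK]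
        _ = Y := rfl
    rw [hPY, Finset.mem_product, Finset.mem_Icc, Finset.mem_Icc]
    constructor
    · apply abs_le.1
      apply hbnd b1
      have h2 : 0 ≤ ∑ i, |b2 i| := Finset.sum_nonneg (fun i _ => abs_nonneg _)
      omega
    · apply abs_le.1
      apply hbnd b2
      have h1 : 0 ≤ ∑ i, |b1 i| := Finset.sum_nonneg (fun i _ => abs_nonneg _)
      omega
  have hfibcount : ∀ p : ℤ × ℤ, ((boxK.filter (fun x => (uf x, vf x) = p)).card : ℝ)
      ≤ cB ^ (k-2) := by
    intro p
    have hpred : (boxK.filter (fun x => (uf x, vf x) = p))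
        = (boxK.filter (fun x => (∑ i, b1 i * x i = p.1) ∧ (∑ i, b2 i * x i = p.2))) := by
      apply Finset.filter_congr
      intro x _
      simp [Prod.ext_iff]
      exact Iff.rfl
    rw [hpred]
    have := fiber_count B b1 b2 hbminor p.1 p.2
    calc ((boxK.filter (fun x => (∑ i, b1 i * x i = p.1) ∧ (∑ i, b2 i * x i = p.2))).card : ℝ)
        ≤ (((Finset.Icc (-B) B).card ^ (k-2) : ℕ) : ℝ) := by exact_mod_cast this
      _ = cB ^ (k-2) := by rw [hcBdef]; push_cast; ring
  have hGsum : ∑ x ∈ boxK, G (uf x, vf x) ≤ cB ^ (k-2) * (24 * (Y:ℝ) * (1 + Real.log Y)) := by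
    rw [← Finset.sum_fiberwise_of_maps_to hmapsG (fun x => G (uf x, vf x))]
    have hstep : ∀ p ∈ PY, ∑ x ∈ boxK.filter (fun x => (uf x, vf x) = p), G (uf x, vf x)
        ≤ cB ^ (k-2) * G p := by
      intro p _
      have he : ∑ x ∈ boxK.filter (fun x => (uf x, vf x) = p), G (uf x, vf x)
          = ∑ x ∈ boxK.filter (fun x => (uf x, vf x) = p), G p := by
        apply Finset.sum_congr rfl
        intro x hx
        rw [Finset.mem_filter] at hx
        rw [hx.2]
      rw [he, Finset.sum_const, nsmul_eq_mul]
      exact mul_le_mul_of_nonneg_right (hfibcount p) (hGnn p)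
    calc ∑ p ∈ PY, ∑ x ∈ boxK.filter (fun x => (uf x, vf x) = p), G (uf x, vf x)
        ≤ ∑ p ∈ PY, cB ^ (k-2) * G p := Finset.sum_le_sum hstep
      _ = cB ^ (k-2) * ∑ p ∈ PY, G p := by rw [Finset.mul_sum]
      _ ≤ cB ^ (k-2) * (24 * (Y:ℝ) * (1 + Real.log Y)) := by
          apply mul_le_mul_of_nonneg_left _ (by positivity)
          rw [hPY, hG]
          exact gcd_max_sum Y hY1
  -- indicator sum
  have hindsum : ∑ x ∈ boxK, (if uf x = 0 ∧ vf x = 0 then cB^m else 0)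
      ≤ cB ^ (k-2) * cB^m := by
    rw [← Finset.sum_filter]
    rw [Finset.sum_const, nsmul_eq_mul]
    apply mul_le_mul_of_nonneg_right _ (by positivity)
    have hpred : (boxK.filter (fun x => uf x = 0 ∧ vf x = 0))
        = (boxK.filter (fun x => (∑ i, b1 i * x i = (0:ℤ)) ∧ (∑ i, b2 i * x i = (0:ℤ)))) := by
      apply Finset.filter_congr
      intro x _
      exact Iff.rfl
    rw [hpred]
    have := fiber_count B b1 b2 hbminor 0 0
    calc ((boxK.filter (fun x => (∑ i, b1 i * x i = (0:ℤ)) ∧ (∑ i, b2 i * x i = (0:ℤ)))).card : ℝ)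
        ≤ (((Finset.Icc (-B) B).card ^ (k-2) : ℕ) : ℝ) := by exact_mod_cast this
      _ = cB ^ (k-2) := by rw [hcBdef]; push_cast; ring
  have hboxKcard : ((boxK.card : ℕ) : ℝ) = cB ^ k := by
    rw [hboxK, Fintype.card_piFinset, Finset.prod_const, card_univ, Fintype.card_fin, hcBdef]
    push_cast; ring
  -- put together
  have hmain : (S.card : ℝ) ≤ cB^(m-2) * 2 * (B:ℝ) * (cB ^ (k-2) * (24 * (Y:ℝ) * (1 + Real.log Y)))
      + cB^(m-2) * 2 * cB ^ k + cB ^ (k-2) * cB^m := by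
    rw [hScard]
    calc ∑ x ∈ boxK, ((boxM.filter (fun y => Pp (x,y))).card : ℝ)
        ≤ ∑ x ∈ boxK, (cB^(m-2) * (2*(B:ℝ)*G (uf x, vf x) + 2)
            + (if uf x = 0 ∧ vf x = 0 then cB^m else 0)) := Finset.sum_le_sum hperx
      _ = (∑ x ∈ boxK, (cB^(m-2) * 2 * (B:ℝ) * G (uf x, vf x)))
          + (∑ x ∈ boxK, (cB^(m-2) * 2))
          + ∑ x ∈ boxK, (if uf x = 0 ∧ vf x = 0 then cB^m else 0) := by
          rw [← Finset.sum_add_distrib, ← Finset.sum_add_distrib]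
          apply Finset.sum_congr rfl
          intros; ring
      _ = cB^(m-2) * 2 * (B:ℝ) * (∑ x ∈ boxK, G (uf x, vf x))
          + (boxK.card : ℝ) * (cB^(m-2) * 2)
          + ∑ x ∈ boxK, (if uf x = 0 ∧ vf x = 0 then cB^m else 0) := by
          rw [← Finset.mul_sum, Finset.sum_const, nsmul_eq_mul]
      _ ≤ cB^(m-2) * 2 * (B:ℝ) * (cB ^ (k-2) * (24 * (Y:ℝ) * (1 + Real.log Y)))
          + cB ^ k * (cB^(m-2) * 2)
          + cB ^ (k-2) * cB^m := by
          have hB0 : (0:ℝ) ≤ (B:ℝ) := by exact_mod_cast (by omega : (0:ℤ) ≤ B)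
          have h1 : (0:ℝ) ≤ cB^(m-2) * 2 * (B:ℝ) := by positivity
          have ha := mul_le_mul_of_nonneg_left hGsum h1
          have hb : (boxK.card : ℝ) * (cB^(m-2) * 2) = cB ^ k * (cB^(m-2) * 2) := by
            rw [hboxKcard]
          linarith [hindsum]
      _ = _ := by ring
  -- numeric estimates
  have hlogX2 : Real.log 2 ≤ Real.log X := Real.log_le_log (by norm_num) hX
  have hlogX : 0 < Real.log X := lt_of_lt_of_le hlog2 hlogX2
  have hYR : ((Y:ℤ):ℝ) = ((K:ℤ):ℝ) * ((B:ℤ):ℝ) := by rw [hYdef]; push_cast; ring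
  have hYle : ((Y:ℤ):ℝ) ≤ ((K:ℤ):ℝ) * X := by
    rw [hYR]
    exact mul_le_mul_of_nonneg_left hBX (by linarith)
  have hY1R : (1:ℝ) ≤ ((Y:ℤ):ℝ) := by exact_mod_cast hY1
  have hlogY : 1 + Real.log Y ≤ c2 * Real.log X := by
    have h1 : Real.log Y ≤ Real.log (((K:ℤ):ℝ) * X) :=
      Real.log_le_log (by linarith) (by linarith [hYle])
    have h2 : Real.log (((K:ℤ):ℝ) * X) = Real.log K + Real.log X :=
      Real.log_mul (by linarith) (by linarith)
    have h3 : 1 + Real.log K ≤ (1 + Real.log K) / Real.log 2 * Real.log X := by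
      rw [div_mul_eq_mul_div, le_div_iff₀ hlog2]
      nlinarith
    rw [hc2def]
    nlinarith
  -- power juggling
  have hXn : ∀ n : ℕ, (0:ℝ) ≤ X ^ n := fun n => by positivity
  have hpowXsplit : X ^ (m-2) * X ^ (k-2) * X * X = X ^ (k+m-2) := by
    have harith : (m-2)+((k-2)+(1+1)) = k+m-2 := by omega
    rw [show X^(m-2)*X^(k-2)*X*X = X^((m-2)+((k-2)+(1+1))) by
      rw [pow_add, pow_add, pow_add, pow_one]; ring]
    rw [harith]
  have hcBpow : ∀ n : ℕ, cB ^ n ≤ (3*X) ^ n := fun n => pow_le_pow_left₀ hcB0 hcB3X n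
  have hpow2 : cB^(m-2) * 2 * cB ^ k + cB ^ (k-2) * cB^m ≤ 3 * cB ^ (k+m-2) := by
    have e1 : cB^(m-2) * cB ^ k = cB ^ (k+m-2) := by rw [← pow_add]; congr 1; omega
    have e2 : cB^(k-2) * cB ^ m = cB ^ (k+m-2) := by rw [← pow_add]; congr 1; omega
    nlinarith [e1, e2]
  have hterm1 : cB^(m-2) * 2 * (B:ℝ) * (cB ^ (k-2) * (24 * (Y:ℝ) * (1 + Real.log Y)))
      ≤ 3^(k+m) * (48 * ((K:ℤ):ℝ) * c2) * X ^ (k+m-2) * Real.log X := by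
    have hc1 : cB^(m-2) ≤ (3*X)^(m-2) := hcBpow _
    have hc2' : cB^(k-2) ≤ (3*X)^(k-2) := hcBpow _
    have hB0 : (0:ℝ) ≤ (B:ℝ) := by exact_mod_cast (by omega : (0:ℤ) ≤ B)
    have hYnn : (0:ℝ) ≤ (Y:ℝ) := by linarith
    have hlY : (0:ℝ) ≤ 1 + Real.log Y := by
      have := Real.log_nonneg hY1R
      linarith
    calc cB^(m-2) * 2 * (B:ℝ) * (cB ^ (k-2) * (24 * (Y:ℝ) * (1 + Real.log Y)))
        ≤ (3*X)^(m-2) * 2 * X * ((3*X) ^ (k-2) * (24 * (((K:ℤ):ℝ) * X) * (c2 * Real.log X))) := by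
          apply mul_le_mul
          · apply mul_le_mul
            · exact mul_le_mul hc1 le_rfl (by norm_num) (by positivity)
            · exact hBX
            · exact hB0
            · positivity
          · apply mul_le_mul hc2'
            · apply mul_le_mul
              · apply mul_le_mul le_rfl hYle hYnn (by norm_num)
              · exact hlogY
              · exact hlY
              · positivity
            · positivity
            · positivity
          · positivity
          · positivity
        _ = (48 * ((K:ℤ):ℝ) * c2) * (3:ℝ)^(m-2) * 3^(k-2) * (X^(m-2) * X^(k-2) * X * X) * Real.log X := by
          rw [mul_pow, mul_pow]
          ring
        _ = (48 * ((K:ℤ):ℝ) * c2) * ((3:ℝ)^(m-2) * 3^(k-2)) * X ^ (k+m-2) * Real.log X := by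
          rw [hpowXsplit]; ring
        _ ≤ 3^(k+m) * (48 * ((K:ℤ):ℝ) * c2) * X ^ (k+m-2) * Real.log X := by
          have h33 : (3:ℝ)^(m-2) * 3^(k-2) ≤ 3^(k+m) := by
            rw [← pow_add]
            apply pow_le_pow_right₀ (by norm_num)
            omega
          have hcoef : (0:ℝ) ≤ 48 * ((K:ℤ):ℝ) * c2 := by positivity
          have hrest : (0:ℝ) ≤ X ^ (k+m-2) * Real.log X := by positivity
          nlinarith [mul_le_mul_of_nonneg_left h33 hcoef]
  have hterm2 : 3 * cB ^ (k+m-2) ≤ 3^(k+m) * (3 / Real.log 2) * X ^ (k+m-2) * Real.log X := by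
    calc 3 * cB ^ (k+m-2) ≤ 3 * (3*X) ^ (k+m-2) := by
          have := hcBpow (k+m-2)
          linarith
      _ = 3 * 3^(k+m-2) * X ^ (k+m-2) := by rw [mul_pow]; ring
      _ ≤ 3^(k+m) * X ^ (k+m-2) := by
          have h1 : (3:ℝ) * 3^(k+m-2) ≤ 3^(k+m) := by
            rw [show (3:ℝ) * 3^(k+m-2) = 3^(k+m-2+1) by rw [pow_succ]; ring]
            apply pow_le_pow_right₀ (by norm_num)
            omega
          exact mul_le_mul_of_nonneg_right h1 (hXn _)
      _ ≤ 3^(k+m) * (3 / Real.log 2) * X ^ (k+m-2) * Real.log X := by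
          have h2 : (1:ℝ) ≤ (3 / Real.log 2) * Real.log X := by
            rw [div_mul_eq_mul_div, le_div_iff₀ hlog2]
            nlinarith
          have h3 : (0:ℝ) ≤ (3:ℝ)^(k+m) * X ^ (k+m-2) := by positivity
          nlinarith [mul_le_mul_of_nonneg_left h2 h3]
  -- rpow conversion
  have hrpow : X ^ ((k : ℝ) + (m : ℝ) - 2) = X ^ (k+m-2 : ℕ) := by
    have hcast : ((k:ℝ)+(m:ℝ)-2) = ((k+m-2 : ℕ) : ℝ) := by
      have h2 : 2 ≤ k+m := by omega
      push_cast [Nat.cast_sub h2]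
      ring
    rw [hcast, Real.rpow_natCast]
  rw [hrpow]
  have hfinal0 : (0:ℝ) ≤ X ^ (k+m-2) * Real.log X := by positivity
  calc (S.card : ℝ) ≤ cB^(m-2) * 2 * (B:ℝ) * (cB ^ (k-2) * (24 * (Y:ℝ) * (1 + Real.log Y)))
      + cB^(m-2) * 2 * cB ^ k + cB ^ (k-2) * cB^m := hmain
    _ ≤ 3^(k+m) * (48 * ((K:ℤ):ℝ) * c2) * X ^ (k+m-2) * Real.log X
        + 3^(k+m) * (3 / Real.log 2) * X ^ (k+m-2) * Real.log X := by
        nlinarith [hpow2, hterm1, hterm2]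
    _ = (3^(k+m) * (48 * ((K:ℤ):ℝ) * c2 + 3 / Real.log 2)) * X ^ (k+m-2) * Real.log X := by
        ring
    _ ≤ cfinal * X ^ (k+m-2) * Real.log X := by
        rw [hcf]
        nlinarith [hfinal0]
end
end

section
/- Let A be an n×n symmetric matrix with rational entries, rank(A) ≥ 9, of the block form A = [[A₁, γ₁, (γ₂,γ₃)C], [γ₁ᵀ, a, υᵀ], [Cᵀ(γ₂,γ₃)ᵀ, υ, D + CᵀHC]], where A₁ is 3×3, γ₁ ∈ ℤ³, γ₂, γ₃ ∈ ℚ³ with (γ₁,γ₂,γ₃) ∈ GL₃(ℚ), a ∈ ℤ, C = (ξ₁,…,ξ_{n−4}) ∈ M_{2,n−4}(ℤ), υᵀ = (v₁,…,v_{n−4}) ∈ ℤ^{n−4}, H ∈ M_{2,2}(ℚ), and D = diag(d₁,…,d_{n−4}) is a rational diagonal matrix. Suppose additionally that rank(ξ₁,ξ₂) = 2. Then there exist pairwise distinct indices i, j, k, u with 1 ≤ i, j, k, u ≤ n−4 such that at least one of the following holds: (i) the 3×3 matrix R_{i,j,k} = [[ξ_i, ξ_j, ξ_k], [v_i, v_j,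 v_k]] (whose columns are (ξ_l, v_l)ᵀ ∈ ℚ³ for l = i, j, k) has rank 3 and d_u ≠ 0; (ii) rank(ξ_i, ξ_j) = 2 and d_k d_u ≠ 0. -/
open Finset Module Submodule
open scoped BigOperators

noncomputable section

lemma rank_eq_card_of_det_ne_zero {k : ℕ} (M : Matrix (Fin k) (Fin k) ℚ)
    (h : M.det ≠ 0) : M.rank = k := by
  rw [Matrix.rank_of_isUnit M ((Matrix.isUnit_iff_isUnit_det M).2 (isUnit_iff_ne_zero.2 h))]
  exact Fintype.card_fin k

lemma det_ne_zero_of_rank_eq_card {k : ℕ} (M : Matrix (Fin k) (Fin k) ℚ)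
    (h : M.rank = k) : M.det ≠ 0 := by
  intro hdet
  obtain ⟨x, hx, hMx⟩ := (Matrix.exists_mulVec_eq_zero_iff).2 hdet
  have hker : x ∈ LinearMap.ker M.mulVecLin := by simpa [Matrix.mulVecLin] using hMx
  have h1 : 0 < finrank ℚ (LinearMap.ker M.mulVecLin) := by
    rw [finrank_pos_iff]
    exact ⟨⟨⟨x, hker⟩, 0, by simp [hx]⟩⟩
  have h2 := LinearMap.finrank_range_add_finrank_ker M.mulVecLin
  rw [show finrank ℚ (Fin k → ℚ) = k by simp] at h2
  have : M.rank = finrank ℚ (LinearMap.range M.mulVecLin) := rfl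
  omega

lemma det_ne_zero_of_linearIndependent {k : ℕ} (w : Fin k → (Fin k → ℚ))
    (h : LinearIndependent ℚ w) :
    (Matrix.of fun s l : Fin k => w l s).det ≠ 0 := by
  intro hdet
  obtain ⟨x, hx, hMx⟩ := (Matrix.exists_mulVec_eq_zero_iff).2 hdet
  apply hx
  have : ∀ i, ∑ j, x j • w j i = 0 := by
    intro i
    have := congrFun hMx i
    simpa [Matrix.mulVec, dotProduct, mul_comm] using this
  have hsum : ∑ j, x j • w j = 0 := by
    funext i
    simpa using this i
  exact funext (Fintype.linearIndependent_iff.1 h x hsum)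

lemma exists_indep_triple {m : ℕ} (w : Fin m → (Fin 3 → ℚ)) (s : Set (Fin m))
    (h : 3 ≤ finrank ℚ (span ℚ (w '' s))) :
    ∃ i j k, i ∈ s ∧ j ∈ s ∧ k ∈ s ∧ i ≠ j ∧ i ≠ k ∧ j ≠ k ∧
      LinearIndependent ℚ ![w i, w j, w k] := by
  obtain ⟨b, hbsub, hbspan, hbind⟩ := exists_linearIndependent ℚ (w '' s)
  have hbfin : b.Finite := hbind.setFinite
  haveI : Fintype b := hbfin.fintype
  have : 3 ≤ b.toFinset.card := by
    have h1 := finrank_span_set_eq_card hbind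
    rw [hbspan] at h1
    rw [Set.toFinset_card] at h1 ⊢
    omega
  obtain ⟨t, hts, htc⟩ := Finset.exists_subset_card_eq this
  obtain ⟨x, y, z, hxy, hxz, hyz, rfl⟩ := Finset.card_eq_three.1 htc
  have hmem : ∀ u ∈ ({x, y, z} : Finset _), u ∈ w '' s := by
    intro u hu
    exact hbsub (Set.mem_toFinset.1 (hts hu))
  obtain ⟨i, hi, hix⟩ := hmem x (by simp)
  obtain ⟨j, hj, hjy⟩ := hmem y (by simp)
  obtain ⟨k, hk, hkz⟩ := hmem z (by simp)
  have hsub : ({x, y, z} : Set _) ⊆ b := by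
    intro u hu
    rcases hu with rfl | rfl | rfl <;>
      exact Set.mem_toFinset.1 (hts (by simp))
  have hind3 : LinearIndependent ℚ ((↑) : ({x, y, z} : Set _) → (Fin 3 → ℚ)) :=
    LinearIndepOn.mono (linearIndependent_subtype_iff.1 hbind) hsub
  have hinj : Function.Injective ![x, y, z] := by
    intro a b hab
    fin_cases a <;> fin_cases b <;> simp_all
  have hrange : Set.range ![x, y, z] = ({x, y, z} : Set _) := by
    ext u
    constructor
    · rintro ⟨l, rfl⟩; fin_cases l <;> simp
    · rintro (rfl | rfl | rfl)
      exacts [⟨0, rfl⟩, ⟨1, rfl⟩, ⟨2, rfl⟩]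
  have hfam : LinearIndependent ℚ ![x, y, z] := by
    rw [← linearIndepOn_id_range_iff hinj, hrange]
    exact hind3
  refine ⟨i, j, k, hi, hj, hk, ?_, ?_, ?_, ?_⟩
  · rintro rfl; exact hxy (hix ▸ hjy ▸ rfl)
  · rintro rfl; exact hxz (hix ▸ hkz ▸ rfl)
  · rintro rfl; exact hyz (hjy ▸ hkz ▸ rfl)
  · rw [show ![w i, w j, w k] = ![x, y, z] by rw [hix, hjy, hkz]]
    exact hfam

def wvec {m : ℕ} (C : Matrix (Fin 2) (Fin m) ℤ) (v : Fin m → ℤ) (l : Fin m) : Fin 3 → ℚ :=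
  ![(C 0 l : ℚ), (C 1 l : ℚ), (v l : ℚ)]

lemma rank_le_of_row_support {p q : ℕ} (M : Matrix (Fin p) (Fin q) ℚ) (T : Finset (Fin p))
    (h : ∀ i ∉ T, M i = 0) : M.rank ≤ T.card := by
  rw [Matrix.rank_eq_finrank_span_row]
  have h1 : Submodule.span ℚ (Set.range M) ≤ Submodule.span ℚ ((T.image M : Finset _) : Set _) := by
    rw [Submodule.span_le]
    rintro _ ⟨i, rfl⟩
    by_cases hi : i ∈ T
    · exact Submodule.subset_span (Finset.mem_coe.2 (Finset.mem_image_of_mem M hi))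
    · rw [h i hi]; exact Submodule.zero_mem _
  exact le_trans (Submodule.finrank_mono h1)
    (le_trans (finrank_span_finset_le_card _) (Finset.card_image_le))


lemma rank_add_le' {p q : ℕ} (A B : Matrix (Fin p) (Fin q) ℚ) :
    (A + B).rank ≤ A.rank + B.rank := by
  rw [Matrix.rank_eq_finrank_span_row, Matrix.rank_eq_finrank_span_row,
    Matrix.rank_eq_finrank_span_row]
  refine le_trans (Submodule.finrank_mono ?_) (Submodule.finrank_add_le_finrank_add_finrank _ _)
  rw [Submodule.span_le]
  rintro _ ⟨i, rfl⟩
  exact Submodule.add_mem_sup (Submodule.subset_span ⟨i, rfl⟩) (Submodule.subset_span ⟨i, rfl⟩)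

lemma rank_bound {n : ℕ} (hn : 9 ≤ n)
    (A : Matrix (Fin n) (Fin n) ℚ) (hsymm : A.IsSymm)
    (γ₂ γ₃ : Fin 3 → ℚ)
    (C : Matrix (Fin 2) (Fin (n - 4)) ℤ) (v : Fin (n - 4) → ℤ)
    (H : Matrix (Fin 2) (Fin 2) ℚ) (d : Fin (n - 4) → ℚ)
    (hTop : ∀ (i j : Fin n) (hi : (i : ℕ) < 3) (hj : 4 ≤ (j : ℕ)),
        A i j = γ₂ ⟨(i : ℕ), hi⟩ * (C 0 ⟨(j : ℕ) - 4, by omega⟩ : ℚ) +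
          γ₃ ⟨(i : ℕ), hi⟩ * (C 1 ⟨(j : ℕ) - 4, by omega⟩ : ℚ))
    (hv : ∀ (j : Fin n) (hj : 4 ≤ (j : ℕ)),
        A ⟨3, by omega⟩ j = (v ⟨(j : ℕ) - 4, by omega⟩ : ℚ))
    (hD : ∀ (i j : Fin n) (hi : 4 ≤ (i : ℕ)) (hj : 4 ≤ (j : ℕ)),
        A i j = (if i = j then d ⟨(i : ℕ) - 4, by omega⟩ else 0) +
          ∑ s : Fin 2, ∑ u : Fin 2,
            (C s ⟨(i : ℕ) - 4, by omega⟩ : ℚ) * H s u * (C u ⟨(j : ℕ) - 4, by omega⟩ : ℚ))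
    (S : Finset (Fin (n - 4))) (hSd : ∀ l, d l ≠ 0 → l ∈ S) :
    A.rank ≤ 4 + finrank ℚ (Submodule.span ℚ (wvec C v '' {l | d l = 0})) + S.card := by
  classical
  set P : Matrix (Fin n) (Fin n) ℚ :=
    Matrix.of (fun i j => if (i : ℕ) < 4 then A i j else 0) with hP
  set G : Matrix (Fin 3) (Fin n) ℚ := Matrix.of (fun t j =>
      if h3 : (j : ℕ) < 3 then ![γ₂ ⟨(j : ℕ), h3⟩, γ₃ ⟨(j : ℕ), h3⟩, 0] t
      else if h4 : 4 ≤ (j : ℕ) then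
        ![∑ u : Fin 2, H 0 u * (C u ⟨(j : ℕ) - 4, by omega⟩ : ℚ),
          ∑ u : Fin 2, H 1 u * (C u ⟨(j : ℕ) - 4, by omega⟩ : ℚ), 0] t
      else ![0, 0, 1] t) with hG
  set Wo : Matrix (Fin n) (Fin 3) ℚ := Matrix.of (fun i t =>
      if h4 : 4 ≤ (i : ℕ) then
        (if d ⟨(i : ℕ) - 4, by omega⟩ = 0 then wvec C v ⟨(i : ℕ) - 4, by omega⟩ t else 0)
      else 0) with hWo
  set RS : Matrix (Fin n) (Fin n) ℚ := A - P - Wo * G with hRS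
  have hdecomp : A = P + Wo * G + RS := by rw [hRS]; abel
  have h1 : P.rank ≤ 4 := by
    have := rank_le_of_row_support P
      ({⟨0, by omega⟩, ⟨1, by omega⟩, ⟨2, by omega⟩, ⟨3, by omega⟩} : Finset (Fin n)) ?_
    · refine this.trans ?_
      refine le_trans (Finset.card_insert_le _ _) ?_
      refine Nat.succ_le_succ (le_trans (Finset.card_insert_le _ _) ?_)
      refine Nat.succ_le_succ (le_trans (Finset.card_insert_le _ _) ?_)
      simp
    · intro i hi
      simp only [Finset.mem_insert, Finset.mem_singleton] at hi
      push_neg at hi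
      have hi4 : ¬ ((i : ℕ) < 4) := by
        intro h
        obtain ⟨h0, h1, h2, h3⟩ := hi
        have e0 : (i:ℕ) ≠ 0 := fun hh => h0 (Fin.ext hh)
        have e1 : (i:ℕ) ≠ 1 := fun hh => h1 (Fin.ext hh)
        have e2 : (i:ℕ) ≠ 2 := fun hh => h2 (Fin.ext hh)
        have e3 : (i:ℕ) ≠ 3 := fun hh => h3 (Fin.ext hh)
        omega
      funext j
      simp [hP, hi4]
  have h2 : (Wo * G).rank ≤ finrank ℚ (Submodule.span ℚ (wvec C v '' {l | d l = 0})) := by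
    refine le_trans (Matrix.rank_mul_le_left _ _) ?_
    rw [Matrix.rank_eq_finrank_span_row]
    refine Submodule.finrank_mono ?_
    rw [Submodule.span_le]
    rintro _ ⟨i, rfl⟩
    by_cases h4 : 4 ≤ (i : ℕ)
    · by_cases hd : d ⟨(i : ℕ) - 4, by omega⟩ = 0
      · refine Submodule.subset_span ⟨⟨(i : ℕ) - 4, by omega⟩, hd, ?_⟩
        funext t
        simp [hWo, h4, hd]
      · have : Wo i = 0 := by funext t; simp [hWo, h4, hd]
        rw [show Wo.row i = 0 from this]; exact Submodule.zero_mem _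
    · have : Wo i = 0 := by funext t; simp [hWo, h4]
      rw [show Wo.row i = 0 from this]; exact Submodule.zero_mem _
  have h3 : RS.rank ≤ S.card := by
    refine le_trans (rank_le_of_row_support RS
      (S.image (fun l : Fin (n - 4) => (⟨4 + (l : ℕ), by omega⟩ : Fin n))) ?_)
      Finset.card_image_le
    intro i hi
    funext j
    show A i j - P i j - (Wo * G) i j = 0
    by_cases h4 : 4 ≤ (i : ℕ)
    · have hdl : d ⟨(i : ℕ) - 4, by omega⟩ = 0 := by
        by_contra hdl
        apply hi
        simp only [Finset.mem_image]
        exact ⟨⟨(i : ℕ) - 4, by omega⟩, hSd _ hdl, by ext; simp; omega⟩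
      have hPi : P i j = 0 := by simp [hP]; omega
      have hWoG : (Wo * G) i j = ∑ t : Fin 3,
          wvec C v ⟨(i : ℕ) - 4, by omega⟩ t * G t j := by
        rw [Matrix.mul_apply]
        congr 1
        funext t
        simp [hWo, h4, hdl]
      rw [hPi, hWoG]
      have key : A i j = ∑ t : Fin 3, wvec C v ⟨(i : ℕ) - 4, by omega⟩ t * G t j := by
        by_cases hj3 : (j : ℕ) < 3
        · have hAij : A i j = A j i := (hsymm.apply j i)
          rw [hAij, hTop j i hj3 h4]
          rw [Fin.sum_univ_three]
          simp [hG, hj3, wvec]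
          ring
        · by_cases hj4 : 4 ≤ (j : ℕ)
          · rw [hD i j h4 hj4]
            have hif : (if i = j then d ⟨(i : ℕ) - 4, by omega⟩ else 0) = 0 := by
              split <;> simp [hdl]
            rw [hif, Fin.sum_univ_three]
            simp only [hG, hG]
            simp [hj3, hj4, not_lt.2 hj4, wvec, Fin.sum_univ_two]
            ring
          · have hj : (j : ℕ) = 3 := by omega
            have hjeq : j = ⟨3, by omega⟩ := by ext; simp [hj]
            have hAij : A i j = A j i := (hsymm.apply j i)
            rw [hAij, hjeq, hv i h4]
            rw [Fin.sum_univ_three]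
            simp [hG, hj3, hj, wvec]
      rw [key]
      ring
    · have hPi : P i j = A i j := by simp [hP]; omega
      have hWoG : (Wo * G) i j = 0 := by
        rw [Matrix.mul_apply]
        apply Finset.sum_eq_zero
        intro t _
        simp [hWo, h4]
      rw [hPi, hWoG]
      ring
  calc A.rank = (P + Wo * G + RS).rank := by rw [← hdecomp]
    _ ≤ (P + Wo * G).rank + RS.rank := rank_add_le' _ _
    _ ≤ (P.rank + (Wo * G).rank) + RS.rank := by
        exact Nat.add_le_add_right (rank_add_le' _ _) _
    _ ≤ 4 + finrank ℚ (Submodule.span ℚ (wvec C v '' {l | d l = 0})) + S.card := by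
        exact Nat.add_le_add (Nat.add_le_add h1 h2) h3

/-- Lemma 5.11. Suppose the rational symmetric `n × n` matrix `A`,
with `rank(A) ≥ 9`, has the block form
`[[A₁, γ₁, (γ₂,γ₃)C], [γ₁ᵀ, a, υᵀ], [Cᵀ(γ₂,γ₃)ᵀ, υ, D + CᵀHC]]` with
`(γ₁,γ₂,γ₃) ∈ GL₃(ℚ)` and `rank(ξ₁,ξ₂) = 2`, where `C = (ξ₁,…,ξ_{n-4})`.
Then there are pairwise distinct `i, j, k, u` such that either
(i) `rank R_{i,j,k} = 3` and `d_u ≠ 0`, or (ii) `rank(ξ_i,ξ_j) = 2` and `d_k d_u ≠ 0`. -/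
theorem statement15 {n : ℕ} (hn : 9 ≤ n)
    (A : Matrix (Fin n) (Fin n) ℚ) (hsymm : A.IsSymm) (hrank : 9 ≤ A.rank)
    (γ₁ : Fin 3 → ℤ) (γ₂ γ₃ : Fin 3 → ℚ) (a : ℤ)
    (C : Matrix (Fin 2) (Fin (n - 4)) ℤ) (v : Fin (n - 4) → ℤ)
    (H : Matrix (Fin 2) (Fin 2) ℚ) (d : Fin (n - 4) → ℚ)
    (hGL : (Matrix.of fun i j : Fin 3 =>
        ![fun s => (γ₁ s : ℚ), γ₂, γ₃] j i).det ≠ 0)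
    (hγ₁ : ∀ (i : Fin n) (hi : (i : ℕ) < 3),
        A i ⟨3, by omega⟩ = (γ₁ ⟨(i : ℕ), hi⟩ : ℚ))
    (hTop : ∀ (i j : Fin n) (hi : (i : ℕ) < 3) (hj : 4 ≤ (j : ℕ)),
        A i j = γ₂ ⟨(i : ℕ), hi⟩ * (C 0 ⟨(j : ℕ) - 4, by omega⟩ : ℚ) +
          γ₃ ⟨(i : ℕ), hi⟩ * (C 1 ⟨(j : ℕ) - 4, by omega⟩ : ℚ))
    (ha : A ⟨3, by omega⟩ ⟨3, by omega⟩ = (a : ℚ))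
    (hv : ∀ (j : Fin n) (hj : 4 ≤ (j : ℕ)),
        A ⟨3, by omega⟩ j = (v ⟨(j : ℕ) - 4, by omega⟩ : ℚ))
    (hD : ∀ (i j : Fin n) (hi : 4 ≤ (i : ℕ)) (hj : 4 ≤ (j : ℕ)),
        A i j = (if i = j then d ⟨(i : ℕ) - 4, by omega⟩ else 0) +
          ∑ s : Fin 2, ∑ u : Fin 2,
            (C s ⟨(i : ℕ) - 4, by omega⟩ : ℚ) * H s u * (C u ⟨(j : ℕ) - 4, by omega⟩ : ℚ))
    (hξ : (Matrix.of fun s l : Fin 2 => (C s ⟨(l : ℕ), by omega⟩ : ℚ)).rank = 2) :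
    ∃ i j k u : Fin (n - 4), i ≠ j ∧ i ≠ k ∧ i ≠ u ∧ j ≠ k ∧ j ≠ u ∧ k ≠ u ∧
      (((Matrix.of fun s l : Fin 3 =>
          ![(C 0 (![i, j, k] l) : ℚ), (C 1 (![i, j, k] l) : ℚ),
            (v (![i, j, k] l) : ℚ)] s).rank = 3 ∧ d u ≠ 0) ∨
        ((Matrix.of fun s l : Fin 2 =>
          (C s (![i, j] l) : ℚ)).rank = 2 ∧ d k ≠ 0 ∧ d u ≠ 0)) := by
  by_contra hcon
  push_neg at hcon
  classical
  set e0 : Fin (n - 4) := ⟨0, by omega⟩ with he0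
  set e1 : Fin (n - 4) := ⟨1, by omega⟩ with he1
  have he01 : e0 ≠ e1 := Fin.ne_of_val_ne (by norm_num)
  have hpair01 : (Matrix.of fun s l : Fin 2 => (C s (![e0, e1] l) : ℚ)) =
      (Matrix.of fun s l : Fin 2 => (C s ⟨(l : ℕ), by omega⟩ : ℚ)) := by
    funext s l
    fin_cases l <;> rfl
  have hdet01 : (Matrix.of fun s l : Fin 2 => (C s (![e0, e1] l) : ℚ)).det ≠ 0 := by
    apply det_ne_zero_of_rank_eq_card
    rw [hpair01]; exact hξ
  have claim1 : ∀ k u : Fin (n - 4), k ≠ e0 → k ≠ e1 → u ≠ e0 → u ≠ e1 → k ≠ u →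
      d k = 0 ∨ d u = 0 := by
    intro k u hk0 hk1 hu0 hu1 hku
    have h := hcon e0 e1 k u he01 (Ne.symm hk0) (Ne.symm hu0) (Ne.symm hk1) (Ne.symm hu1) hku
    by_cases hdk : d k = 0
    · exact Or.inl hdk
    · exact Or.inr (h.2 (by rw [hpair01]; exact hξ) hdk)
  obtain ⟨s₀, hs₀⟩ : ∃ s₀ : Fin (n - 4), ∀ l, d l ≠ 0 → l = e0 ∨ l = e1 ∨ l = s₀ := by
    by_cases hex : ∃ l, d l ≠ 0 ∧ l ≠ e0 ∧ l ≠ e1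
    · obtain ⟨t₀, hdt₀, ht00, ht01⟩ := hex
      refine ⟨t₀, fun l hdl => ?_⟩
      by_cases hl0 : l = e0; · exact Or.inl hl0
      by_cases hl1 : l = e1; · exact Or.inr (Or.inl hl1)
      by_cases hls : l = t₀; · exact Or.inr (Or.inr hls)
      rcases claim1 l t₀ hl0 hl1 ht00 ht01 hls with h | h
      · exact absurd h hdl
      · exact absurd h hdt₀
    · push_neg at hex
      refine ⟨e0, fun l hdl => ?_⟩
      rcases eq_or_ne l e0 with h | h
      · exact Or.inl h
      · exact Or.inr (Or.inl (hex l hdl h))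
  obtain ⟨S, hSd⟩ : ∃ S : Finset (Fin (n - 4)), ∀ l, l ∈ S ↔ d l ≠ 0 :=
    ⟨Finset.univ.filter (fun l => d l ≠ 0), fun l => by simp⟩
  have hmain := rank_bound hn A hsymm γ₂ γ₃ C v H d hTop hv hD S (fun l h => (hSd l).2 h)
  have hmemS : ∀ l, l ∈ S ↔ d l ≠ 0 := hSd
  have hsub : S ⊆ {e0, e1, s₀} := by
    intro l hl
    rcases hs₀ l ((hmemS l).1 hl) with h | h | h <;> simp [h]
  have hTcard : ({e0, e1, s₀} : Finset (Fin (n - 4))).card ≤ 3 := by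
    refine le_trans (Finset.card_insert_le _ _) (Nat.succ_le_succ ?_)
    exact le_trans (Finset.card_insert_le _ _) (Nat.succ_le_succ (Finset.card_singleton _).le)
  have hScard : S.card ≤ 3 := (Finset.card_le_card hsub).trans hTcard
  obtain ⟨r, hrdef⟩ : ∃ r, finrank ℚ (Submodule.span ℚ (wvec C v '' {l | d l = 0})) = r :=
    ⟨_, rfl⟩
  rw [hrdef] at hmain
  have hr3 : r ≤ 3 := by
    rw [← hrdef]
    have h1 : finrank ℚ (Submodule.span ℚ (wvec C v '' {l | d l = 0})) ≤
        finrank ℚ (Fin 3 → ℚ) := Submodule.finrank_le _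
    simpa using h1
  have hge : 9 ≤ 4 + r + S.card := le_trans hrank hmain
  have hc23 : S.card = 2 ∨ S.card = 3 := by omega
  rcases hc23 with hc2 | hc3
  · have hr' : 3 ≤ r := by omega
    obtain ⟨i, j, k, hi, hj, hk, hij, hik, hjk, hind⟩ :=
      exists_indep_triple (wvec C v) {l | d l = 0} (by rw [hrdef]; exact hr')
    obtain ⟨u, hu⟩ := Finset.card_pos.1 (show 0 < S.card by omega)
    have hdu : d u ≠ 0 := (hmemS u).1 hu
    have hdi : d i = 0 := hi
    have hdj : d j = 0 := hj
    have hdk : d k = 0 := hk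
    have hiu : i ≠ u := fun h => hdu (h ▸ hdi)
    have hju : j ≠ u := fun h => hdu (h ▸ hdj)
    have hku : k ≠ u := fun h => hdu (h ▸ hdk)
    have hrank3 : (Matrix.of fun s l : Fin 3 =>
        ![(C 0 (![i, j, k] l) : ℚ), (C 1 (![i, j, k] l) : ℚ),
          (v (![i, j, k] l) : ℚ)] s).rank = 3 := by
      have hM3 : (Matrix.of fun s l : Fin 3 =>
          ![(C 0 (![i, j, k] l) : ℚ), (C 1 (![i, j, k] l) : ℚ),
            (v (![i, j, k] l) : ℚ)] s) =
          (Matrix.of fun s l : Fin 3 => ![wvec C v i, wvec C v j, wvec C v k] l s) := by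
        funext s l
        fin_cases l <;> rfl
      rw [hM3]
      exact rank_eq_card_of_det_ne_zero _ (det_ne_zero_of_linearIndependent _ hind)
    exact hdu ((hcon i j k u hij hik hiu hjk hju hku).1 hrank3)
  · have hSeq : S = {e0, e1, s₀} :=
      Finset.eq_of_subset_of_card_le hsub (by rw [hc3]; exact hTcard)
    have hTc3 : ({e0, e1, s₀} : Finset (Fin (n - 4))).card = 3 := by rw [← hSeq]; exact hc3
    have hd0 : d e0 ≠ 0 := (hmemS e0).1 (by rw [hSeq]; simp)
    have hd1 : d e1 ≠ 0 := (hmemS e1).1 (by rw [hSeq]; simp)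
    have hds : d s₀ ≠ 0 := (hmemS s₀).1 (by rw [hSeq]; simp)
    have h0s : e0 ≠ s₀ := by
      rintro rfl
      have heq : ({e0, e1, e0} : Finset (Fin (n - 4))) = {e0, e1} := by
        ext x; simp; try tauto
      rw [heq] at hTc3
      have h2 : ({e0, e1} : Finset (Fin (n - 4))).card ≤ 2 :=
        le_trans (Finset.card_insert_le _ _) (Nat.succ_le_succ (Finset.card_singleton _).le)
      omega
    have h1s : e1 ≠ s₀ := by
      rintro rfl
      have heq : ({e0, e1, e1} : Finset (Fin (n - 4))) = {e0, e1} := by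
        ext x; simp; try tauto
      rw [heq] at hTc3
      have h2 : ({e0, e1} : Finset (Fin (n - 4))).card ≤ 2 :=
        le_trans (Finset.card_insert_le _ _) (Nat.succ_le_succ (Finset.card_singleton _).le)
      omega
    have hxi : ∀ l : Fin (n - 4), d l = 0 → (C 0 l : ℚ) = 0 ∧ (C 1 l : ℚ) = 0 := by
      intro l hdl
      have hdl0 : l ≠ e0 := by rintro rfl; exact hd0 hdl
      have hdl1 : l ≠ e1 := by rintro rfl; exact hd1 hdl
      have hdls : l ≠ s₀ := by rintro rfl; exact hds hdl
      have hdet0l : (Matrix.of fun s t : Fin 2 => (C s (![e0, l] t) : ℚ)).det = 0 := by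
        by_contra hne
        have hrk := rank_eq_card_of_det_ne_zero _ hne
        exact hds ((hcon e0 l e1 s₀ (Ne.symm hdl0) he01 h0s hdl1 hdls h1s).2 hrk hd1)
      have hdet1l : (Matrix.of fun s t : Fin 2 => (C s (![e1, l] t) : ℚ)).det = 0 := by
        by_contra hne
        have hrk := rank_eq_card_of_det_ne_zero _ hne
        exact hds ((hcon e1 l e0 s₀ (Ne.symm hdl1) (Ne.symm he01) h1s hdl0 hdls h0s).2 hrk hd0)
      have h01 := hdet01
      rw [Matrix.det_fin_two] at h01 hdet0l hdet1l
      simp only [Matrix.of_apply, Matrix.cons_val', Matrix.cons_val_zero, Matrix.cons_val_one,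
        Matrix.head_cons, Matrix.head_fin_const, Matrix.empty_val',
        Matrix.cons_val_fin_one] at h01 hdet0l hdet1l
      have hx : ((C 0 e0 : ℚ) * (C 1 e1 : ℚ) - (C 0 e1 : ℚ) * (C 1 e0 : ℚ)) * (C 0 l : ℚ) = 0 := by
        linear_combination (C 0 e1 : ℚ) * hdet0l - (C 0 e0 : ℚ) * hdet1l
      have hy : ((C 0 e0 : ℚ) * (C 1 e1 : ℚ) - (C 0 e1 : ℚ) * (C 1 e0 : ℚ)) * (C 1 l : ℚ) = 0 := by
        linear_combination (C 1 e1 : ℚ) * hdet0l - (C 1 e0 : ℚ) * hdet1l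
      exact ⟨(mul_eq_zero.1 hx).resolve_left h01, (mul_eq_zero.1 hy).resolve_left h01⟩
    have hone : (![0, 0, 1] : Fin 3 → ℚ) ≠ 0 := fun h => by simpa using congrFun h 2
    have hspan : Submodule.span ℚ (wvec C v '' {l | d l = 0}) ≤
        Submodule.span ℚ {(![0, 0, 1] : Fin 3 → ℚ)} := by
      rw [Submodule.span_le]
      rintro _ ⟨l, hl, rfl⟩
      have h := hxi l hl
      refine Submodule.mem_span_singleton.2 ⟨(v l : ℚ), ?_⟩
      funext t
      fin_cases t <;> simp [wvec, h.1, h.2]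
    have hrle : r ≤ 1 := by
      rw [← hrdef]
      refine le_trans (Submodule.finrank_mono hspan) ?_
      rw [finrank_span_singleton hone]
    omega
end
end

section
/- Let A be an n×n symmetric matrix with rational entries, rank(A) ≥ 9, of the block form A = [[A₁, ΓC], [CᵀΓᵀ, D + CᵀHC]], where A₁ is 3×3, Γ = (γ₁,γ₂,γ₃) ∈ GL₃(ℚ), C = (ξ₁,…,ξ_{n−3}) ∈ M_{3,n−3}(ℤ), H ∈ M_{3,3}(ℚ), and D = diag(d₁,…,d_{n−3}) is a rational diagonal matrix. Suppose additionally that rank(ξ₁,ξ₂,ξ₃) = 3. Then there exist pairwise distinct indices u₁, u₂, u₃, u₄, u₅, u₆ with 1 ≤ u₁,…,u₆ ≤ n−3 such that rank(ξ_{u₁}, ξ_{u₂}, ξ_{u₃}) = 3 and d_{u₄} d_{u₅} d_{u₆} ≠ 0. -/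
open Finset
open scoped BigOperators

noncomputable section

set_option maxHeartbeats 1000000 in
/-- Lemma 5.13. Suppose the rational symmetric `n × n` matrix `A`, with
`rank(A) ≥ 9`, has the block form `[[A₁, ΓC], [CᵀΓᵀ, D + CᵀHC]]` with `Γ ∈ GL₃(ℚ)`,
`C = (ξ₁,…,ξ_{n-3}) ∈ M_{3,n-3}(ℤ)`, `D = diag(d₁,…,d_{n-3})`, and `rank(ξ₁,ξ₂,ξ₃) = 3`.
Then there are pairwise distinct `u₁,…,u₆` with `rank(ξ_{u₁},ξ_{u₂},ξ_{u₃}) = 3` and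
`d_{u₄} d_{u₅} d_{u₆} ≠ 0`. -/
theorem statement16 {n : ℕ} (hn : 9 ≤ n)
    (A : Matrix (Fin n) (Fin n) ℚ) (hsymm : A.IsSymm) (hrank : 9 ≤ A.rank)
    (Γ : Matrix (Fin 3) (Fin 3) ℚ) (hΓ : Γ.det ≠ 0)
    (C : Matrix (Fin 3) (Fin (n - 3)) ℤ)
    (H : Matrix (Fin 3) (Fin 3) ℚ) (d : Fin (n - 3) → ℚ)
    (hTop : ∀ (i j : Fin n) (hi : (i : ℕ) < 3) (hj : 3 ≤ (j : ℕ)),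
        A i j = ∑ s : Fin 3, Γ ⟨(i : ℕ), hi⟩ s * (C s ⟨(j : ℕ) - 3, by omega⟩ : ℚ))
    (hD : ∀ (i j : Fin n) (hi : 3 ≤ (i : ℕ)) (hj : 3 ≤ (j : ℕ)),
        A i j = (if i = j then d ⟨(i : ℕ) - 3, by omega⟩ else 0) +
          ∑ s : Fin 3, ∑ u : Fin 3,
            (C s ⟨(i : ℕ) - 3, by omega⟩ : ℚ) * H s u * (C u ⟨(j : ℕ) - 3, by omega⟩ : ℚ))
    (hξ : (Matrix.of fun s l : Fin 3 => (C s ⟨(l : ℕ), by omega⟩ : ℚ)).rank = 3) :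
    ∃ u : Fin 6 → Fin (n - 3), Function.Injective u ∧
      (Matrix.of fun s l : Fin 3 => (C s (![u 0, u 1, u 2] l) : ℚ)).rank = 3 ∧
      d (u 3) ≠ 0 ∧ d (u 4) ≠ 0 ∧ d (u 5) ≠ 0 := by
  classical
  have hn3 : 3 ≤ n := by omega
  -- the columns of `C` as rational vectors
  set v : Fin (n - 3) → (Fin 3 → ℚ) := fun l s => (C s l : ℚ) with hvdef
  -- Step A : the columns of `C` span `ℚ³`
  have htop : Submodule.span ℚ (Set.range v) = ⊤ := by
    have h1 := hξ
    rw [Matrix.rank_eq_finrank_span_cols, Matrix.col] at h1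
    have hsub : Set.range ((Matrix.of fun s l : Fin 3 =>
        (C s ⟨(l : ℕ), by omega⟩ : ℚ)).transpose) ⊆ Set.range v := by
      rintro x ⟨l, rfl⟩
      exact ⟨⟨(l : ℕ), by omega⟩, rfl⟩
    apply Submodule.eq_top_of_finrank_eq
    have hge := Submodule.finrank_mono (Submodule.span_mono (R := ℚ) hsub)
    rw [h1] at hge
    have hle : Module.finrank ℚ (Submodule.span ℚ (Set.range v)) ≤ 3 := by
      simpa [Module.finrank_fin_fun] using
        Submodule.finrank_le (Submodule.span ℚ (Set.range v))
    rw [Module.finrank_fin_fun]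
    omega
  set W : Finset (Fin (n - 3)) := Finset.univ.filter (fun i => d i ≠ 0) with hWdef
  set s₀ : Set (Fin 3 → ℚ) := v '' {i | d i = 0} with hs₀def
  obtain ⟨b₀, hb₀s, hb₀span, hb₀li⟩ := exists_linearIndependent ℚ s₀
  have hb₀t : b₀ ⊆ Set.range v := hb₀s.trans (Set.image_subset_range _ _)
  obtain ⟨b, hbt, hb₀b, hbsp, hbli⟩ : ∃ b ⊆ Set.range v, b₀ ⊆ b ∧ Set.range v ⊆ Submodule.span ℚ b ∧
      LinearIndependent ℚ ((↑) : b → (Fin 3 → ℚ)) := exists_linearIndepOn_id_extension hb₀li hb₀t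
  have hbtop : Submodule.span ℚ b = ⊤ := by
    rw [eq_top_iff, ← htop]
    exact Submodule.span_le.2 hbsp
  have hbfin : b.Finite := hbli.setFinite
  letI : Fintype b := hbfin.fintype
  have hbcard : b.toFinset.card = 3 := by
    rw [← finrank_span_set_eq_card hbli, hbtop, finrank_top, Module.finrank_fin_fun]
  obtain ⟨x₀, x₁, x₂, hx01, hx02, hx12, hbeq⟩ := Finset.card_eq_three.mp hbcard
  have hbset : b = {x₀, x₁, x₂} := by
    rw [← Set.coe_toFinset b, hbeq]; simp
  -- pick indices for the basis vectors
  have hpick : ∀ x ∈ b, ∃ i : Fin (n - 3), v i = x ∧ (x ∈ b₀ → d i = 0) := by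
    intro x hx
    by_cases hx0 : x ∈ b₀
    · obtain ⟨i, hi, hvi⟩ := hb₀s hx0
      exact ⟨i, hvi, fun _ => hi⟩
    · obtain ⟨i, hvi⟩ := hbt hx
      exact ⟨i, hvi, fun h => absurd h hx0⟩
  have hx₀b : x₀ ∈ b := by rw [hbset]; simp
  have hx₁b : x₁ ∈ b := by rw [hbset]; simp
  have hx₂b : x₂ ∈ b := by rw [hbset]; simp
  obtain ⟨i₀, hvi₀, hdi₀⟩ := hpick x₀ hx₀b
  obtain ⟨i₁, hvi₁, hdi₁⟩ := hpick x₁ hx₁b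
  obtain ⟨i₂, hvi₂, hdi₂⟩ := hpick x₂ hx₂b
  have hi01 : i₀ ≠ i₁ := fun h => hx01 (by rw [← hvi₀, ← hvi₁, h])
  have hi02 : i₀ ≠ i₂ := fun h => hx02 (by rw [← hvi₀, ← hvi₂, h])
  have hi12 : i₁ ≠ i₂ := fun h => hx12 (by rw [← hvi₁, ← hvi₂, h])
  -- the auxiliary matrix `M = [[Γ],[CᵀH]]`
  set M : Matrix (Fin n) (Fin 3) ℚ := Matrix.of fun i u =>
    if h : (i : ℕ) < 3 then Γ ⟨(i : ℕ), h⟩ u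
    else ∑ s : Fin 3, (C s ⟨(i : ℕ) - 3, by have := i.isLt; omega⟩ : ℚ) * H s u with hMdef
  set Kf : Finset (Fin n) :=
    (Finset.univ.image fun k : Fin 3 => (⟨(k : ℕ), by have := k.isLt; omega⟩ : Fin n)) ∪
      (W.image fun i : Fin (n - 3) => (⟨(i : ℕ) + 3, by have := i.isLt; omega⟩ : Fin n)) with hKdef
  have hKcard : Kf.card ≤ 3 + W.card := by
    refine (Finset.card_union_le _ _).trans (add_le_add ?_ Finset.card_image_le)
    exact Finset.card_image_le.trans (by simp)
  have hcolU : ∀ j : Fin n, A.transpose j ∈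
      Submodule.span ℚ (A.transpose '' ↑Kf) ⊔
        Submodule.map M.mulVecLin (Submodule.span ℚ s₀) := by
    intro j
    by_cases hjK : j ∈ Kf
    · exact Submodule.mem_sup_left (Submodule.subset_span ⟨j, hjK, rfl⟩)

    · have hj3 : 3 ≤ (j : ℕ) := by
        by_contra h
        push_neg at h
        exact hjK (Finset.mem_union_left _ (Finset.mem_image.2
          ⟨⟨(j : ℕ), h⟩, Finset.mem_univ _, Fin.val_injective rfl⟩))
      have hjlt : (j : ℕ) - 3 < n - 3 := by have := j.isLt; omega
      have hdj : d ⟨(j : ℕ) - 3, hjlt⟩ = 0 := by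
        by_contra hne
        refine hjK (Finset.mem_union_right _ (Finset.mem_image.2
          ⟨⟨(j : ℕ) - 3, hjlt⟩, ?_, ?_⟩))
        · rw [hWdef]; simp [hne]
        · apply Fin.val_injective; simp; omega
      have hcol : A.transpose j = M.mulVec (v ⟨(j : ℕ) - 3, hjlt⟩) := by
        funext i
        simp only [Matrix.transpose_apply, Matrix.mulVec, dotProduct]
        by_cases hi3 : (i : ℕ) < 3
        · rw [hTop i j hi3 hj3]
          refine Finset.sum_congr rfl fun u _ => ?_
          rw [hMdef]
          simp [Matrix.of_apply, hi3, hvdef]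
        · have hi3' : 3 ≤ (i : ℕ) := le_of_not_gt hi3
          rw [hD i j hi3' hj3]
          have h0 : (if i = j then d ⟨(i : ℕ) - 3, by have := i.isLt; omega⟩ else 0) = 0 := by
            split
            · next heq =>
                subst heq
                exact hdj
            · rfl
          rw [h0, zero_add, Finset.sum_comm]
          refine Finset.sum_congr rfl fun u _ => ?_
          rw [hMdef]
          simp only [Matrix.of_apply, dif_neg hi3, hvdef]
          rw [Finset.sum_mul]
      rw [hcol, ← Matrix.mulVecLin_apply]
      exact Submodule.mem_sup_right
        (Submodule.mem_map_of_mem (Submodule.subset_span ⟨_, hdj, rfl⟩))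
  -- the key rank inequality
  have hrankle : (9 : ℕ) ≤ 3 + W.card + Module.finrank ℚ (Submodule.span ℚ s₀) := by
    refine le_trans hrank ?_
    rw [Matrix.rank_eq_finrank_span_cols, Matrix.col]
    have h2 : Module.finrank ℚ (Submodule.span ℚ (Set.range A.transpose)) ≤
        Module.finrank ℚ ↥(Submodule.span ℚ (A.transpose '' ↑Kf) ⊔
          Submodule.map M.mulVecLin (Submodule.span ℚ s₀)) :=
      Submodule.finrank_mono (Submodule.span_le.2 (Set.range_subset_iff.2 hcolU))
    have h3 := Submodule.finrank_sup_add_finrank_inf_eq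
      (Submodule.span ℚ (A.transpose '' ↑Kf)) (Submodule.map M.mulVecLin (Submodule.span ℚ s₀))
    have h4 : Module.finrank ℚ (Submodule.span ℚ (A.transpose '' ↑Kf)) ≤ Kf.card := by
      have h4' := finrank_span_finset_le_card (R := ℚ) (Kf.image A.transpose)
      rw [Set.finrank, Finset.coe_image (f := (A.transpose : Fin n → Fin n → ℚ))] at h4'
      exact h4'.trans Finset.card_image_le
    have h5 : Module.finrank ℚ (Submodule.map M.mulVecLin (Submodule.span ℚ s₀)) ≤
        Module.finrank ℚ (Submodule.span ℚ s₀) := Submodule.finrank_map_le _ _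
    omega
  -- the cardinality of `b₀`
  set bf₀ : Finset (Fin 3 → ℚ) := ({x₀, x₁, x₂} : Finset _).filter (· ∈ b₀) with hbf₀
  have hb₀eq : b₀ = ↑bf₀ := by
    ext x
    simp only [hbf₀, Finset.coe_filter, Finset.mem_insert, Finset.mem_singleton,
      Set.mem_setOf_eq]
    constructor
    · intro hx
      have hxb := hb₀b hx
      rw [hbset] at hxb
      exact ⟨by simpa using hxb, hx⟩
    · exact fun h => h.2
  have hbf₀li : LinearIndependent ℚ ((↑) : ↥(bf₀ : Set (Fin 3 → ℚ)) → (Fin 3 → ℚ)) := by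
    rw [← hb₀eq]
    exact hb₀li
  have hr₀card : Module.finrank ℚ (Submodule.span ℚ s₀) = bf₀.card := by
    rw [← hb₀span, hb₀eq]
    exact finrank_span_finset_eq_card hbf₀li
  -- counting
  set T : Finset (Fin (n - 3)) := {i₀, i₁, i₂} with hT
  set S₁ : Finset (Fin 3) := Finset.univ.filter (fun k => ![i₀, i₁, i₂] k ∈ W) with hS₁
  set S₂ : Finset (Fin 3) := Finset.univ.filter (fun k => ![x₀, x₁, x₂] k ∈ b₀) with hS₂
  have hdisj : Disjoint S₁ S₂ := by
    rw [Finset.disjoint_left]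
    intro k hk1 hk2
    rw [hS₁, Finset.mem_filter] at hk1
    rw [hS₂, Finset.mem_filter] at hk2
    have hk1' := hk1.2
    have hk2' := hk2.2
    rw [hWdef, Finset.mem_filter] at hk1'
    fin_cases k
    · exact hk1'.2 (hdi₀ hk2')
    · exact hk1'.2 (hdi₁ hk2')
    · exact hk1'.2 (hdi₂ hk2')
  have hS₁S₂ : S₁.card + S₂.card ≤ 3 := by
    rw [← Finset.card_union_of_disjoint hdisj]
    simpa using Finset.card_le_univ (S₁ ∪ S₂)
  have hWT : (W ∩ T).card ≤ S₁.card := by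
    have hsub : W ∩ T ⊆ S₁.image (fun k => ![i₀, i₁, i₂] k) := by
      intro w hw
      rw [Finset.mem_inter] at hw
      have hwT := hw.2
      rw [hT] at hwT
      simp only [Finset.mem_insert, Finset.mem_singleton] at hwT
      rcases hwT with h | h | h
      · exact Finset.mem_image.2 ⟨0, by rw [hS₁]; simp [← h, hw.1], h.symm⟩
      · exact Finset.mem_image.2 ⟨1, by rw [hS₁]; simp [← h, hw.1], h.symm⟩
      · exact Finset.mem_image.2 ⟨2, by rw [hS₁]; simp [← h, hw.1], h.symm⟩
    exact (Finset.card_le_card hsub).trans Finset.card_image_le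
  have hbf₀S₂ : bf₀.card ≤ S₂.card := by
    have hsub : bf₀ ⊆ S₂.image (fun k => ![x₀, x₁, x₂] k) := by
      intro x hx
      rw [hbf₀, Finset.mem_filter] at hx
      obtain ⟨hmem, hxb⟩ := hx
      simp only [Finset.mem_insert, Finset.mem_singleton] at hmem
      rcases hmem with h | h | h
      · exact Finset.mem_image.2 ⟨0, by rw [hS₂]; simp [← h, hxb], h.symm⟩
      · exact Finset.mem_image.2 ⟨1, by rw [hS₂]; simp [← h, hxb], h.symm⟩
      · exact Finset.mem_image.2 ⟨2, by rw [hS₂]; simp [← h, hxb], h.symm⟩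
    exact (Finset.card_le_card hsub).trans Finset.card_image_le
  have hsdiff : (W ∩ T).card + (W \ T).card = W.card := Finset.card_inter_add_card_sdiff W T
  have h3le : 3 ≤ (W \ T).card := by omega
  obtain ⟨T', hT'sub, hT'card⟩ := Finset.exists_subset_card_eq h3le
  obtain ⟨j₀, j₁, j₂, hj01, hj02, hj12, hT'eq⟩ := Finset.card_eq_three.mp hT'card
  have hj₀ : j₀ ∈ W \ T := hT'sub (hT'eq ▸ by simp)
  have hj₁ : j₁ ∈ W \ T := hT'sub (hT'eq ▸ by simp)
  have hj₂ : j₂ ∈ W \ T := hT'sub (hT'eq ▸ by simp)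
  have hdj : ∀ j, j ∈ W \ T → d j ≠ 0 := by
    intro j hj
    have := (Finset.mem_sdiff.1 hj).1
    rw [hWdef, Finset.mem_filter] at this
    exact this.2
  have hjT : ∀ j, j ∈ W \ T → j ≠ i₀ ∧ j ≠ i₁ ∧ j ≠ i₂ := by
    intro j hj
    have hnT := (Finset.mem_sdiff.1 hj).2
    rw [hT] at hnT
    simp only [Finset.mem_insert, Finset.mem_singleton, not_or] at hnT
    exact hnT
  obtain ⟨hj₀i₀, hj₀i₁, hj₀i₂⟩ := hjT j₀ hj₀
  obtain ⟨hj₁i₀, hj₁i₁, hj₁i₂⟩ := hjT j₁ hj₁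
  obtain ⟨hj₂i₀, hj₂i₁, hj₂i₂⟩ := hjT j₂ hj₂
  refine ⟨![i₀, i₁, i₂, j₀, j₁, j₂], ?_, ?_, ?_, ?_, ?_⟩
  · intro a c hac
    fin_cases a <;> fin_cases c <;>
      first
        | rfl
        | (exact absurd hac (by assumption))
        | (exact absurd hac.symm (by assumption))
  · have hvec : ![![i₀, i₁, i₂, j₀, j₁, j₂] 0, ![i₀, i₁, i₂, j₀, j₁, j₂] 1,
        ![i₀, i₁, i₂, j₀, j₁, j₂] 2] = ![i₀, i₁, i₂] := by
      funext l; fin_cases l <;> rfl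
    rw [hvec, Matrix.rank_eq_finrank_span_cols, Matrix.col]
    have hNT : (Matrix.of fun s l : Fin 3 => (C s (![i₀, i₁, i₂] l) : ℚ)).transpose = ![x₀, x₁, x₂] := by
      funext l s
      fin_cases l
      · exact congrFun hvi₀ s
      · exact congrFun hvi₁ s
      · exact congrFun hvi₂ s
    rw [hNT]
    have hf : Function.Injective (fun l : Fin 3 =>
        (⟨![x₀, x₁, x₂] l, by fin_cases l <;> assumption⟩ : b)) := by
      intro a c h
      have h' : ![x₀, x₁, x₂] a = ![x₀, x₁, x₂] c := congrArg Subtype.val h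
      fin_cases a <;> fin_cases c <;>
        first
          | rfl
          | (exact absurd h' (by assumption))
          | (exact absurd h'.symm (by assumption))
    have hli3 : LinearIndependent ℚ ![x₀, x₁, x₂] := hbli.comp _ hf
    rw [finrank_span_eq_card hli3]
    simp
  · exact hdj j₀ hj₀
  · exact hdj j₁ hj₁
  · exact hdj j₂ hj₂
end
end
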